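/- arXiv:2006.07266 — 4 statements merged into one kernel-verified Lean document; each statement's English description precedes it below -/
import Mathlib

section
/- Let G be a locally compact Abelian group, K ⊆ G compact with non-empty interior, and 1 ≤ p < ∞. The space BS^p_K(G) of locally p-integrable functions f with ‖f‖_{S^p_K} < ∞, equipped with the norm ‖·‖_{S^p_K}, is a Banach space (every Cauchy sequence converges in this norm). -/
open MeasureTheory Filter Topology
open scoped ENNReal Pointwise

noncomputable section

variable {G : Type*} [AddCommGroup G] [TopologicalSpace G] [IsTopologicalAddGroup G]
  [LocallyCompactSpace G] [MeasurableSpace G] [BorelSpace G]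

/-- Translation operator: `Tt t f = f (· - t)`. -/
def Tt (t : G) (f : G → ℂ) : G → ℂ := fun x => f (x - t)

/-- Stepanov `p`-norm with respect to the set `K`:
`sup_y ( θ_G(K)⁻¹ ∫_{y+K} |f|^p )^(1/p)`. -/
def SNorm (μ : Measure G) (K : Set G) (p : ℝ) (f : G → ℂ) : ℝ≥0∞ :=
  ⨆ y : G, ((∫⁻ x in y +ᵥ K, (‖f x‖₊ : ℝ≥0∞) ^ p ∂μ) / μ K) ^ (1 / p)

/-- A set `R ⊆ G` is relatively dense if `R + C = G` for some compact `C`. -/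
def RelativelyDense (R : Set G) : Prop :=
  ∃ C : Set G, IsCompact C ∧ R + C = Set.univ

/-- `f` is Stepanov `p`-almost periodic (w.r.t. `K`) if for every `ε > 0` the set of
`ε`-almost periods in the Stepanov norm is relatively dense. -/
def StepanovAP (μ : Measure G) (K : Set G) (p : ℝ) (f : G → ℂ) : Prop :=
  ∀ ε : ℝ, 0 < ε →
    RelativelyDense {t : G | SNorm μ K p (f - Tt t f) < ENNReal.ofReal ε}

/-- `f ∈ L^p_loc(G)`. -/
def MemLpLoc (μ : Measure G) (p : ℝ) (f : G → ℂ) : Prop :=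
  AEStronglyMeasurable f μ ∧
    ∀ C : Set G, IsCompact C → (∫⁻ x in C, (‖f x‖₊ : ℝ≥0∞) ^ p ∂μ) < ⊤

/-- A continuous character of `G`. -/
def IsChar (χ : G → ℂ) : Prop :=
  Continuous χ ∧ (∀ x y, χ (x + y) = χ x * χ y) ∧ ∀ x, ‖χ x‖ = 1

/-- A trigonometric polynomial: a finite linear combination of continuous characters. -/
def IsTrigPoly (P : G → ℂ) : Prop :=
  ∃ (n : ℕ) (c : Fin n → ℂ) (χ : Fin n → G → ℂ),
    (∀ i, IsChar (χ i)) ∧ P = fun x => ∑ i, c i * χ i x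

/-- A van Hove sequence: precompact open sets whose `K`-boundaries are
asymptotically negligible. -/
def IsVanHove (μ : Measure G) (A : ℕ → Set G) : Prop :=
  (∀ n, IsOpen (A n) ∧ IsCompact (closure (A n))) ∧
    ∀ K : Set G, IsCompact K →
      Tendsto (fun n =>
        μ ((closure (A n + K) \ A n) ∪ (((A n)ᶜ - K) ∩ closure (A n))) / μ (A n))
        atTop (nhds 0)

/-- The Weyl `p`-seminorm along the sequence `A`. -/
def WSemi (μ : Measure G) (A : ℕ → Set G) (p : ℝ) (f : G → ℂ) : ℝ≥0∞ :=
  Filter.limsup (fun n => SNorm μ (A n) p f) atTop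

/-- `f` is Weyl `p`-almost periodic w.r.t. `A`: approximable by trigonometric
polynomials in the Weyl seminorm. -/
def WeylAP (μ : Measure G) (A : ℕ → Set G) (p : ℝ) (f : G → ℂ) : Prop :=
  ∀ ε : ℝ, 0 < ε → ∃ P : G → ℂ, IsTrigPoly P ∧ WSemi μ A p (f - P) < ENNReal.ofReal ε


section AuxCauchy

variable {α : Type*} {m0 : MeasurableSpace α} {ν : Measure α}
variable {E : Type*} [NormedAddCommGroup E]

theorem aux_eLpNorm'_sum_norm_sub_le_tsum {f : ℕ → α → E}
    (hf : ∀ n, AEStronglyMeasurable (f n) ν) {p : ℝ} (hp1 : 1 ≤ p) {B : ℕ → ℝ≥0∞}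
    (h_cau : ∀ N n m : ℕ, N ≤ n → N ≤ m → eLpNorm' (f n - f m) p ν < B N) (n : ℕ) :
    eLpNorm' (fun x => ∑ i ∈ Finset.range (n + 1), ‖f (i + 1) x - f i x‖) p ν ≤ ∑' i, B i := by
  have hgf_norm_diff :
      (fun x => ∑ i ∈ Finset.range (n + 1), ‖f (i + 1) x - f i x‖) =
        ∑ i ∈ Finset.range (n + 1), (fun x => ‖f (i + 1) x - f i x‖) :=
    funext fun x => by simp
  rw [hgf_norm_diff]
  refine (eLpNorm'_sum_le (fun i _ => ((hf (i + 1)).sub (hf i)).norm) hp1).trans ?_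
  simp only [eLpNorm'_norm]
  refine (Finset.sum_le_sum ?_).trans (Summable.sum_le_tsum _ (fun m _ => zero_le) ENNReal.summable)
  exact fun m _ => (h_cau m (m + 1) m (Nat.le_succ m) (le_refl m)).le

theorem aux_lintegral_rpow_sum_le
    {f : ℕ → α → E} {p : ℝ} (hp1 : 1 ≤ p) {B : ℕ → ℝ≥0∞} (n : ℕ)
    (hn : eLpNorm' (fun x => ∑ i ∈ Finset.range (n + 1), ‖f (i + 1) x - f i x‖) p ν ≤ ∑' i, B i) :
    (∫⁻ a, (∑ i ∈ Finset.range (n + 1), ‖f (i + 1) a - f i a‖₊ : ℝ≥0∞) ^ p ∂ν) ≤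
      (∑' i, B i) ^ p := by
  have hp_pos : 0 < p := zero_lt_one.trans_le hp1
  rw [← inv_inv p, @ENNReal.le_rpow_inv_iff _ _ p⁻¹ (by simp [hp_pos]), inv_inv p]
  simp_rw [eLpNorm', one_div] at hn
  have h_nnnorm_nonneg :
    (fun a => (‖∑ i ∈ Finset.range (n + 1), ‖f (i + 1) a - f i a‖‖₊ : ℝ≥0∞) ^ p) = fun a =>
      (∑ i ∈ Finset.range (n + 1), (‖f (i + 1) a - f i a‖₊ : ℝ≥0∞)) ^ p := by
    ext1 a
    congr
    simp_rw [← enorm_eq_nnnorm, ← ofReal_norm]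
    rw [← ENNReal.ofReal_sum_of_nonneg]
    · rw [Real.norm_of_nonneg _]
      exact Finset.sum_nonneg fun x _ => norm_nonneg _
    · exact fun x _ => norm_nonneg _
  change
    (∫⁻ a, (fun x => (‖∑ i ∈ Finset.range (n + 1), ‖f (i + 1) x - f i x‖‖₊ : ℝ≥0∞) ^ p) a ∂ν) ^ p⁻¹ ≤
      ∑' i, B i at hn
  rwa [h_nnnorm_nonneg] at hn

theorem aux_lintegral_rpow_tsum_le {f : ℕ → α → E}
    (hf : ∀ n, AEStronglyMeasurable (f n) ν) {p : ℝ} (hp1 : 1 ≤ p) {B : ℕ → ℝ≥0∞}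
    (h :
      ∀ n,
        (∫⁻ a, (∑ i ∈ Finset.range (n + 1), ‖f (i + 1) a - f i a‖₊ : ℝ≥0∞) ^ p ∂ν) ≤
          (∑' i, B i) ^ p) :
    (∫⁻ a, (∑' i, ‖f (i + 1) a - f i a‖₊ : ℝ≥0∞) ^ p ∂ν) ^ (1 / p) ≤ ∑' i, B i := by
  have hp_pos : 0 < p := zero_lt_one.trans_le hp1
  suffices h_pow : (∫⁻ a, (∑' i, ‖f (i + 1) a - f i a‖₊ : ℝ≥0∞) ^ p ∂ν) ≤ (∑' i, B i) ^ p by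
      rwa [one_div, ← ENNReal.le_rpow_inv_iff (by simp [hp_pos] : 0 < p⁻¹), inv_inv]
  have h_tsum_1 :
    ∀ g : ℕ → ℝ≥0∞, ∑' i, g i = atTop.liminf fun n => ∑ i ∈ Finset.range (n + 1), g i := by
    intro g
    rw [ENNReal.tsum_eq_liminf_sum_nat, ← liminf_nat_add _ 1]
  simp_rw [h_tsum_1 _]
  rw [← h_tsum_1]
  have h_liminf_pow :
    (∫⁻ a, (atTop.liminf
      fun n => ∑ i ∈ Finset.range (n + 1), (‖f (i + 1) a - f i a‖₊ : ℝ≥0∞)) ^ p ∂ν) =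
      ∫⁻ a, atTop.liminf
        fun n => (∑ i ∈ Finset.range (n + 1), (‖f (i + 1) a - f i a‖₊ : ℝ≥0∞)) ^ p ∂ν := by
    refine lintegral_congr fun x => ?_
    have h_rpow_mono := ENNReal.strictMono_rpow_of_pos (zero_lt_one.trans_le hp1)
    have h_rpow_surj := (ENNReal.rpow_left_bijective hp_pos.ne.symm).2
    refine (h_rpow_mono.orderIsoOfSurjective _ h_rpow_surj).liminf_apply ?_ ?_ ?_ ?_
    all_goals isBoundedDefault
  rw [h_liminf_pow]
  refine (lintegral_liminf_le' ?_).trans ?_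
  · exact fun n =>
      (Finset.aemeasurable_fun_sum (Finset.range (n + 1)) fun i _ =>
            ((hf (i + 1)).sub (hf i)).enorm).pow_const
        _
  · exact liminf_le_of_frequently_le' (Frequently.of_forall h)

theorem aux_tsum_nnnorm_sub_ae_lt_top {f : ℕ → α → E}
    (hf : ∀ n, AEStronglyMeasurable (f n) ν) {p : ℝ} (hp1 : 1 ≤ p) {B : ℕ → ℝ≥0∞}
    (hB : ∑' i, B i ≠ ∞)
    (h_cau : ∀ N n m : ℕ, N ≤ n → N ≤ m → eLpNorm' (f n - f m) p ν < B N) :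
    ∀ᵐ x ∂ν, (∑' i, ‖f (i + 1) x - f i x‖₊ : ℝ≥0∞) < ∞ := by
  have hp_pos : 0 < p := zero_lt_one.trans_le hp1
  have h : (∫⁻ a, (∑' i, ‖f (i + 1) a - f i a‖₊ : ℝ≥0∞) ^ p ∂ν) ^ (1 / p) ≤ ∑' i, B i :=
    aux_lintegral_rpow_tsum_le hf hp1 fun n =>
      aux_lintegral_rpow_sum_le hp1 n (aux_eLpNorm'_sum_norm_sub_le_tsum hf hp1 h_cau n)
  have h_integral : (∫⁻ a, (∑' i, ‖f (i + 1) a - f i a‖₊ : ℝ≥0∞) ^ p ∂ν) < ∞ := by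
    have h_tsum_lt_top : (∑' i, B i) ^ p < ∞ := ENNReal.rpow_lt_top_of_nonneg hp_pos.le hB
    refine lt_of_le_of_lt ?_ h_tsum_lt_top
    rwa [one_div, ← ENNReal.le_rpow_inv_iff (by simp [hp_pos] : 0 < p⁻¹), inv_inv] at h
  have rpow_ae_lt_top : ∀ᵐ x ∂ν, (∑' i, ‖f (i + 1) x - f i x‖₊ : ℝ≥0∞) ^ p < ∞ := by
    refine ae_lt_top' (AEMeasurable.pow_const ?_ _) h_integral.ne
    exact AEMeasurable.ennreal_tsum fun n => ((hf (n + 1)).sub (hf n)).enorm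
  refine rpow_ae_lt_top.mono fun x hx => ?_
  rwa [← ENNReal.lt_rpow_inv_iff hp_pos,
    ENNReal.top_rpow_of_pos (by simp [hp_pos] : 0 < p⁻¹)] at hx

end AuxCauchy

theorem BSpK_complete (μ : Measure G) [μ.IsAddHaarMeasure]
    (p : ℝ) (hp : 1 ≤ p) (K : Set G) (hK : IsCompact K) (hK' : (interior K).Nonempty)
    (f : ℕ → G → ℂ) (hmem : ∀ n, MemLpLoc μ p (f n))
    (hfin : ∀ n, SNorm μ K p (f n) ≠ ⊤)
    (hcauchy : ∀ ε : ℝ, 0 < ε → ∃ N : ℕ, ∀ m ≥ N, ∀ n ≥ N,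
      SNorm μ K p (f m - f n) < ENNReal.ofReal ε) :
    ∃ g : G → ℂ, MemLpLoc μ p g ∧ SNorm μ K p g ≠ ⊤ ∧
      ∀ ε : ℝ, 0 < ε → ∃ N : ℕ, ∀ n ≥ N,
        SNorm μ K p (f n - g) < ENNReal.ofReal ε := by
  classical
  have hppos : (0 : ℝ) < p := lt_of_lt_of_le one_pos hp
  have hp0 : p ≠ 0 := hppos.ne'
  have h1p : (0 : ℝ) ≤ 1 / p := div_nonneg zero_le_one hppos.le
  have hc0 : μ K ≠ 0 :=
    (lt_of_lt_of_le (isOpen_interior.measure_pos μ hK') (measure_mono interior_subset)).ne'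
  have hcT : μ K ≠ ⊤ := hK.measure_lt_top.ne
  set cp : ℝ≥0∞ := (μ K) ^ (1 / p) with hcp_def
  have hcp0 : cp ≠ 0 := by
    simp only [hcp_def, ne_eq, ENNReal.rpow_eq_zero_iff, not_or, not_and_or]
    exact ⟨Or.inl hc0, Or.inl hcT⟩
  have hcpT : cp ≠ ⊤ := by
    simp only [hcp_def, ne_eq, ENNReal.rpow_eq_top_iff, not_or, not_and_or]
    exact ⟨Or.inl hc0, Or.inl hcT⟩
  -- rewrite SNorm in terms of eLpNorm'
  have hSNorm : ∀ u : G → ℂ,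
      SNorm μ K p u = ⨆ y : G, eLpNorm' u p (μ.restrict (y +ᵥ K)) / cp := by
    intro u
    refine iSup_congr fun y => ?_
    rw [ENNReal.div_rpow_of_nonneg _ _ h1p]
    rfl
  have hle : ∀ (u : G → ℂ) (y : G),
      eLpNorm' u p (μ.restrict (y +ᵥ K)) ≤ SNorm μ K p u * cp := by
    intro u y
    have h := le_iSup (fun y => eLpNorm' u p (μ.restrict (y +ᵥ K)) / cp) y
    rw [← hSNorm] at h
    exact (ENNReal.div_le_iff hcp0 hcpT).mp h
  have hSle : ∀ (u : G → ℂ) (s : ℝ≥0∞),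
      (∀ y : G, eLpNorm' u p (μ.restrict (y +ᵥ K)) ≤ s * cp) → SNorm μ K p u ≤ s := by
    intro u s h
    rw [hSNorm]
    exact iSup_le fun y => (ENNReal.div_le_iff hcp0 hcpT).mpr (h y)
  have hScongr : ∀ u v : G → ℂ, u =ᵐ[μ] v → SNorm μ K p u = SNorm μ K p v := by
    intro u v h
    simp only [hSNorm]
    exact iSup_congr fun y => by rw [eLpNorm'_congr_ae (ae_restrict_of_ae h)]
  -- local integrability from finite SNorm
  have hloc : ∀ u : G → ℂ, SNorm μ K p u ≠ ⊤ →
      ∀ C : Set G, IsCompact C → (∫⁻ x in C, (‖u x‖₊ : ℝ≥0∞) ^ p ∂μ) < ⊤ := by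
    intro u hu C hC
    obtain ⟨k₀, hk₀⟩ := hK'
    obtain ⟨t, ht⟩ := hC.elim_finite_subcover (fun y : G => y +ᵥ interior K)
      (fun y => isOpen_interior.vadd y)
      (fun x _ => Set.mem_iUnion.mpr ⟨x - k₀, ⟨k₀, hk₀, by simp⟩⟩)
    have hsub : C ⊆ ⋃ y ∈ t, y +ᵥ K :=
      ht.trans (Set.iUnion₂_mono fun y _ => Set.vadd_set_mono interior_subset)
    calc (∫⁻ x in C, (‖u x‖₊ : ℝ≥0∞) ^ p ∂μ)
        ≤ ∫⁻ x in ⋃ y ∈ t, y +ᵥ K, (‖u x‖₊ : ℝ≥0∞) ^ p ∂μ :=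
          lintegral_mono' (Measure.restrict_mono hsub le_rfl) le_rfl
      _ = ∫⁻ x in ⋃ y : t, (y : G) +ᵥ K, (‖u x‖₊ : ℝ≥0∞) ^ p ∂μ := by
          rw [show (⋃ y ∈ t, y +ᵥ K) = ⋃ y : ↥t, (y : G) +ᵥ K from by
            ext x; simp]
      _ ≤ ∑' y : t, ∫⁻ x in (y : G) +ᵥ K, (‖u x‖₊ : ℝ≥0∞) ^ p ∂μ :=
          lintegral_iUnion_le _ _
      _ = ∑ y ∈ t.attach, ∫⁻ x in (y : G) +ᵥ K, (‖u x‖₊ : ℝ≥0∞) ^ p ∂μ := tsum_fintype _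
      _ < ⊤ := by
          refine ENNReal.sum_lt_top.mpr fun y _ => ?_
          have h1 := hle u (y : G)
          have h2 : (∫⁻ x in (y : G) +ᵥ K, (‖u x‖₊ : ℝ≥0∞) ^ p ∂μ)
              = (eLpNorm' u p (μ.restrict ((y : G) +ᵥ K))) ^ p := by
            rw [eLpNorm', ← ENNReal.rpow_mul, one_div, inv_mul_cancel₀ hp0, ENNReal.rpow_one]
            rfl
          rw [h2]
          calc (eLpNorm' u p (μ.restrict ((y : G) +ᵥ K))) ^ p
              ≤ (SNorm μ K p u * cp) ^ p := ENNReal.rpow_le_rpow h1 hppos.le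
            _ < ⊤ := ENNReal.rpow_lt_top_of_nonneg hppos.le
                (ENNReal.mul_ne_top hu hcpT)
  -- choose a rapidly Cauchy subsequence
  choose N' hN' using fun k : ℕ => hcauchy ((1 / 2 : ℝ) ^ k) (by positivity)
  set n : ℕ → ℕ := fun k => Nat.rec (N' 0) (fun k ih => max (ih + 1) (N' (k + 1))) k with hn_def
  have hn_succ : ∀ k, n (k + 1) = max (n k + 1) (N' (k + 1)) := fun k => rfl
  have hn_mono : StrictMono n := strictMono_nat_of_lt_succ fun k => by
    rw [hn_succ]; exact lt_of_lt_of_le (Nat.lt_succ_self _) (le_max_left _ _)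
  have hnN' : ∀ k, N' k ≤ n k := by
    intro k
    cases k with
    | zero => exact le_rfl
    | succ k => rw [hn_succ]; exact le_max_right _ _
  have hfast : ∀ N a b : ℕ, N ≤ a → N ≤ b →
      SNorm μ K p (f (n a) - f (n b)) < ENNReal.ofReal ((1 / 2 : ℝ) ^ N) := by
    intro N a b ha hb
    exact hN' N (n a) (le_trans (hnN' N) (hn_mono.monotone ha))
      (n b) (le_trans (hnN' N) (hn_mono.monotone hb))
  -- measurable versions
  set f' : ℕ → G → ℂ := fun k => ((hmem k).1).mk (f k) with hf'_def
  have hf'meas : ∀ k, StronglyMeasurable (f' k) := fun k => (hmem k).1.stronglyMeasurable_mk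
  have hff' : ∀ k, f k =ᵐ[μ] f' k := fun k => (hmem k).1.ae_eq_mk
  set u : ℕ → G → ℂ := fun k => f' (n k) with hu_def
  set B : ℕ → ℝ≥0∞ := fun N => ENNReal.ofReal ((1 / 2 : ℝ) ^ N) * cp with hB_def
  clear_value n f'
  have hB : ∑' i, B i ≠ ∞ := by
    rw [hB_def, ENNReal.tsum_mul_right]
    refine ENNReal.mul_ne_top ?_ hcpT
    have hpow : ∀ N : ℕ, ENNReal.ofReal ((1 / 2 : ℝ) ^ N)
        = (ENNReal.ofReal (1 / 2)) ^ N := fun N => ENNReal.ofReal_pow (by norm_num) N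
    simp_rw [hpow]
    rw [ENNReal.tsum_geometric]
    refine ENNReal.inv_ne_top.mpr fun h => ?_
    rw [tsub_eq_zero_iff_le] at h
    exact absurd h (not_le.mpr (ENNReal.ofReal_lt_one.mpr (by norm_num)))
  have h_cau : ∀ y : G, ∀ N a b : ℕ, N ≤ a → N ≤ b →
      eLpNorm' (u a - u b) p (μ.restrict (y +ᵥ K)) < B N := by
    intro y N a b ha hb
    have heq : eLpNorm' (u a - u b) p (μ.restrict (y +ᵥ K))
        = eLpNorm' (f (n a) - f (n b)) p (μ.restrict (y +ᵥ K)) :=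
      eLpNorm'_congr_ae (ae_restrict_of_ae (((hff' (n a)).sub (hff' (n b))).symm))
    rw [heq, hB_def]
    calc eLpNorm' (f (n a) - f (n b)) p (μ.restrict (y +ᵥ K))
        ≤ SNorm μ K p (f (n a) - f (n b)) * cp := hle _ y
      _ < ENNReal.ofReal ((1 / 2 : ℝ) ^ N) * cp :=
          ENNReal.mul_lt_mul_left hcp0 hcpT (hfast N a b ha hb)
  have hHy : ∀ y : G, ∀ᵐ x ∂μ.restrict (y +ᵥ K),
      (∑' i, (‖u (i + 1) x - u i x‖₊ : ℝ≥0∞)) < ∞ := fun y =>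
    aux_tsum_nnnorm_sub_ae_lt_top
      (fun k => (hf'meas (n k)).aestronglyMeasurable.restrict) hp hB (h_cau y)
  -- the limit candidate
  set H : G → ℝ≥0∞ := fun x => ∑' i, (‖u (i + 1) x - u i x‖₊ : ℝ≥0∞) with hH_def
  have hHmeas : Measurable H :=
    Measurable.ennreal_tsum fun i =>
      ((hf'meas (n (i + 1))).sub (hf'meas (n i))).measurable.enorm
  set S : Set G := {x | H x < ∞} with hS_def
  have hS : MeasurableSet S := measurableSet_lt hHmeas measurable_const
  set v : ℕ → G → ℂ := fun k => S.indicator (u k) with hv_def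
  have hvmeas : ∀ k, StronglyMeasurable (v k) := fun k => (hf'meas (n k)).indicator hS
  have hconv : ∀ x : G, ∃ l : ℂ, Tendsto (fun k => v k x) atTop (𝓝 l) := by
    intro x
    by_cases hx : x ∈ S
    · have hxlt : H x < ∞ := hx
      have hsum0 : Summable fun i => (‖u (i + 1) x - u i x‖₊ : NNReal) :=
        ENNReal.tsum_coe_ne_top_iff_summable.mp hxlt.ne
      have hsum : Summable fun i => ‖u (i + 1) x - u i x‖ := by
        have := NNReal.summable_coe.mpr hsum0
        simpa [coe_nnnorm] using this
      have hcs : CauchySeq fun k => u k x :=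
        cauchySeq_of_summable_dist (by simpa [dist_eq_norm, norm_sub_rev] using hsum)
      obtain ⟨l, hl⟩ := cauchySeq_tendsto_of_complete hcs
      refine ⟨l, ?_⟩
      have : (fun k => v k x) = fun k => u k x :=
        funext fun k => Set.indicator_of_mem hx _
      rw [this]; exact hl
    · refine ⟨0, ?_⟩
      have : (fun k => v k x) = fun _ => (0 : ℂ) :=
        funext fun k => Set.indicator_of_notMem hx _
      rw [this]; exact tendsto_const_nhds
  obtain ⟨g, hgmeas, hglim⟩ :=
    exists_stronglyMeasurable_limit_of_tendsto_ae
      (fun k => (hvmeas k).aestronglyMeasurable) (Eventually.of_forall hconv)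
  have hulim : ∀ y : G, ∀ᵐ x ∂μ.restrict (y +ᵥ K),
      Tendsto (fun k => u k x) atTop (𝓝 (g x)) := by
    intro y
    filter_upwards [hHy y, ae_restrict_of_ae hglim] with x hx1 hx2
    have hxS : x ∈ S := hx1
    have : (fun k => v k x) = fun k => u k x :=
      funext fun k => Set.indicator_of_mem hxS _
    rwa [this] at hx2
  -- approximation estimate
  have hEst : ∀ ε : ℝ, 0 < ε → ∃ N : ℕ, ∀ m ≥ N,
      SNorm μ K p (f m - g) ≤ ENNReal.ofReal ε := by
    intro ε hε
    obtain ⟨N, hN⟩ := hcauchy ε hε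
    refine ⟨N, fun m hm => ?_⟩
    refine hSle _ _ fun y => ?_
    have h1 : eLpNorm' (f m - g) p (μ.restrict (y +ᵥ K)) ≤
        atTop.liminf fun k => eLpNorm' (f m - u k) p (μ.restrict (y +ᵥ K)) := by
      refine Lp.eLpNorm'_lim_le_liminf_eLpNorm' hppos
        (fun k => ((hmem m).1.restrict).sub
          ((hf'meas (n k)).aestronglyMeasurable.restrict)) ?_
      filter_upwards [hulim y] with x hx
      exact tendsto_const_nhds.sub hx
    refine h1.trans (liminf_le_of_frequently_le' (frequently_atTop.mpr fun k₀ => ?_))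
    refine ⟨max k₀ N, le_max_left _ _, ?_⟩
    have hkN : N ≤ n (max k₀ N) :=
      le_trans (le_max_right k₀ N) (hn_mono.le_apply)
    have heq : eLpNorm' (f m - u (max k₀ N)) p (μ.restrict (y +ᵥ K))
        = eLpNorm' (f m - f (n (max k₀ N))) p (μ.restrict (y +ᵥ K)) :=
      eLpNorm'_congr_ae (ae_restrict_of_ae
        ((EventuallyEq.refl _ (f m)).sub ((hff' (n (max k₀ N)))).symm))
    rw [heq]
    calc eLpNorm' (f m - f (n (max k₀ N))) p (μ.restrict (y +ᵥ K))
        ≤ SNorm μ K p (f m - f (n (max k₀ N))) * cp := hle _ y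
      _ ≤ ENNReal.ofReal ε * cp :=
          mul_le_mul_left (hN m hm (n (max k₀ N)) hkN).le _
  -- finiteness of SNorm g
  have hgfin : SNorm μ K p g ≠ ⊤ := by
    obtain ⟨N, hN⟩ := hEst 1 one_pos
    have h1 : SNorm μ K p (f N - g) ≤ ENNReal.ofReal 1 := hN N le_rfl
    have htri : SNorm μ K p ((g - f N) + f N) ≤
        SNorm μ K p (g - f N) + SNorm μ K p (f N) := by
      refine hSle _ _ fun y => ?_
      have hadd : eLpNorm' ((g - f N) + f N) p (μ.restrict (y +ᵥ K)) ≤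
          eLpNorm' (g - f N) p (μ.restrict (y +ᵥ K))
            + eLpNorm' (f N) p (μ.restrict (y +ᵥ K)) :=
        eLpNorm'_add_le
          ((hgmeas.aestronglyMeasurable.sub (hmem N).1).restrict)
          ((hmem N).1.restrict) hp
      refine hadd.trans ?_
      rw [add_mul]
      exact add_le_add (hle _ y) (hle _ y)
    have hgfN : (g - f N) + f N = g := by ext x; simp
    rw [hgfN] at htri
    have hneg : SNorm μ K p (g - f N) = SNorm μ K p (f N - g) := by
      have : g - f N = -(f N - g) := by ext x; simp
      rw [this]
      simp only [hSNorm]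
      exact iSup_congr fun y => by rw [eLpNorm'_neg]
    refine ne_top_of_le_ne_top ?_ htri
    rw [hneg]
    exact ENNReal.add_ne_top.mpr
      ⟨ne_top_of_le_ne_top ENNReal.ofReal_ne_top h1, hfin N⟩
  refine ⟨g, ⟨hgmeas.aestronglyMeasurable, fun C hC => hloc g hgfin C hC⟩, hgfin, ?_⟩
  intro ε hε
  obtain ⟨N, hN⟩ := hEst (ε / 2) (by linarith)
  refine ⟨N, fun m hm => lt_of_le_of_lt (hN m hm) ?_⟩
  exact (ENNReal.ofReal_lt_ofReal_iff hε).mpr (by linarith)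
end
end

section
/- Let f be Stepanov p-almost periodic on G and ε > 0. Then there exists a bounded Stepanov p-almost periodic function b such that ‖f − b‖_{S^p} < ε; moreover b can be taken as the truncation f_L(x) = f(x) if |f(x)| ≤ L, and L·f(x)/|f(x)| otherwise, for some L ∈ ℕ. -/
open MeasureTheory Filter Topology
open scoped ENNReal Pointwise

set_option linter.unusedSectionVars false
noncomputable section

variable {G : Type*} [AddCommGroup G] [TopologicalSpace G] [IsTopologicalAddGroup G]
  [LocallyCompactSpace G] [MeasurableSpace G] [BorelSpace G]

/-- Truncation of `f` at level `L`. -/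
def trunc (L : ℝ) (f : G → ℂ) : G → ℂ := fun x =>
  if ‖f x‖ ≤ L then f x else (L / ‖f x‖ : ℝ) • f x

/-! ### Auxiliary lemmas -/

/-- Truncation map on `ℂ`. -/
def cTrunc (L : ℝ) (z : ℂ) : ℂ := if ‖z‖ ≤ L then z else (L / ‖z‖ : ℝ) • z

lemma trunc_eq_cTrunc (L : ℝ) (f : G → ℂ) (x : G) : trunc L f x = cTrunc L (f x) := rfl

lemma cTrunc_of_le {L : ℝ} {z : ℂ} (h : ‖z‖ ≤ L) : cTrunc L z = z := if_pos h

lemma norm_cTrunc_le {L : ℝ} (hL : 0 ≤ L) (z : ℂ) : ‖cTrunc L z‖ ≤ L := by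
  rw [cTrunc]
  split_ifs with h
  · exact h
  · have hz : 0 < ‖z‖ := lt_of_le_of_lt hL (not_le.mp h)
    rw [norm_smul, Real.norm_eq_abs, abs_of_nonneg (by positivity), div_mul_cancel₀ _ hz.ne']

lemma norm_sub_cTrunc {L : ℝ} (hL : 0 ≤ L) {z : ℂ} (h : ¬ ‖z‖ ≤ L) :
    ‖z - cTrunc L z‖ = ‖z‖ - L := by
  have hz : 0 < ‖z‖ := lt_of_le_of_lt hL (not_le.mp h)
  rw [cTrunc, if_neg h]
  have e : z - (L / ‖z‖ : ℝ) • z = ((1 - L / ‖z‖ : ℝ)) • z := by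
    rw [sub_smul, one_smul]
  have hfrac : (0:ℝ) ≤ 1 - L / ‖z‖ := by
    rw [sub_nonneg, div_le_one hz]; exact (not_le.mp h).le
  rw [e, norm_smul, Real.norm_eq_abs, abs_of_nonneg hfrac, sub_mul, one_mul,
    div_mul_cancel₀ _ hz.ne']

lemma norm_sub_cTrunc_le {L : ℝ} (hL : 0 ≤ L) (z : ℂ) : ‖z - cTrunc L z‖ ≤ ‖z‖ := by
  by_cases h : ‖z‖ ≤ L
  · rw [cTrunc_of_le h, sub_self, norm_zero]; exact norm_nonneg z
  · rw [norm_sub_cTrunc hL h]; linarith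

lemma cTrunc_lip_aux {L : ℝ} (hL : 0 ≤ L) {z w : ℂ} (hz : ‖z‖ ≤ L) (hw : ¬ ‖w‖ ≤ L) :
    ‖cTrunc L z - cTrunc L w‖ ≤ 2 * ‖z - w‖ := by
  have h1 : cTrunc L z - cTrunc L w = (z - w) + (w - cTrunc L w) := by
    rw [cTrunc_of_le hz]; abel
  have h2 : ‖w‖ - L ≤ ‖z - w‖ := by
    have := norm_sub_norm_le w z
    rw [norm_sub_rev] at this
    linarith
  calc ‖cTrunc L z - cTrunc L w‖ ≤ ‖z - w‖ + ‖w - cTrunc L w‖ := by rw [h1]; exact norm_add_le _ _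
    _ ≤ 2 * ‖z - w‖ := by rw [norm_sub_cTrunc hL hw]; linarith

lemma radial_real (L a b d : ℝ) (hL : 0 ≤ L) (ha : L < a) (hb : L < b) (hd : |b - a| ≤ d) :
    (L/a) * d + |L/a - L/b| * b ≤ 2 * d := by
  have ha0 : 0 < a := lt_of_le_of_lt hL ha
  have hb0 : 0 < b := lt_of_le_of_lt hL hb
  have e : L/a - L/b = L * (b - a)/(a*b) := by field_simp
  have h2 : |L/a - L/b| * b = (L/a) * |b - a| := by
    rw [e, abs_div, abs_mul, abs_of_nonneg hL, abs_of_pos (mul_pos ha0 hb0)]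
    field_simp
  have h4 : L/a ≤ 1 := by rw [div_le_one ha0]; exact ha.le
  have hd0 : 0 ≤ d := le_trans (abs_nonneg _) hd
  rw [h2]
  have t1 : (L/a)*d ≤ 1*d := mul_le_mul_of_nonneg_right h4 hd0
  have t2 : (L/a)*|b-a| ≤ 1*|b-a| := mul_le_mul_of_nonneg_right h4 (abs_nonneg _)
  linarith

lemma cTrunc_lipschitz {L : ℝ} (hL : 0 ≤ L) (z w : ℂ) :
    ‖cTrunc L z - cTrunc L w‖ ≤ 2 * ‖z - w‖ := by
  by_cases hz : ‖z‖ ≤ L <;> by_cases hw : ‖w‖ ≤ L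
  · rw [cTrunc_of_le hz, cTrunc_of_le hw]
    have := norm_nonneg (z - w); linarith
  · exact cTrunc_lip_aux hL hz hw
  · rw [norm_sub_rev, norm_sub_rev z w]; exact cTrunc_lip_aux hL hw hz
  · have ha : (0:ℝ) < ‖z‖ := lt_of_le_of_lt hL (not_le.mp hz)
    have hb : (0:ℝ) < ‖w‖ := lt_of_le_of_lt hL (not_le.mp hw)
    have key : cTrunc L z - cTrunc L w
        = ((L / ‖z‖ : ℝ)) • (z - w) + ((L / ‖z‖ - L / ‖w‖ : ℝ)) • w := by
      rw [cTrunc, cTrunc, if_neg hz, if_neg hw, smul_sub, sub_smul]; abel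
    have h3 : |‖w‖ - ‖z‖| ≤ ‖z - w‖ := by
      rw [abs_sub_comm]; exact abs_norm_sub_norm_le z w
    have h5 : (0:ℝ) ≤ L / ‖z‖ := by positivity
    have h6 : ‖cTrunc L z - cTrunc L w‖
        ≤ (L / ‖z‖) * ‖z - w‖ + |(L / ‖z‖ - L / ‖w‖ : ℝ)| * ‖w‖ := by
      rw [key]
      refine (norm_add_le _ _).trans (le_of_eq ?_)
      rw [norm_smul, norm_smul, Real.norm_eq_abs, Real.norm_eq_abs, abs_of_nonneg h5]
    exact h6.trans (radial_real L (‖z‖) (‖w‖) (‖z - w‖) hL (not_le.mp hz) (not_le.mp hw) h3)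

lemma measurable_cTrunc (L : ℝ) : Measurable (cTrunc L) := by
  refine Measurable.ite (measurableSet_le measurable_norm measurable_const) measurable_id ?_
  exact (measurable_const.div measurable_norm).smul measurable_id

/-- The quantity appearing under the supremum in `SNorm`. -/
def Qf (μ : Measure G) (K : Set G) (p : ℝ) (h : G → ℂ) (y : G) : ℝ≥0∞ :=
  ((∫⁻ x in y +ᵥ K, (‖h x‖₊ : ℝ≥0∞) ^ p ∂μ) / μ K) ^ (1 / p)

lemma SNorm_eq_iSup_Qf (μ : Measure G) (K : Set G) (p : ℝ) (h : G → ℂ) :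
    SNorm μ K p h = ⨆ y, Qf μ K p h y := rfl

lemma Qf_le_SNorm (μ : Measure G) (K : Set G) (p : ℝ) (h : G → ℂ) (y : G) :
    Qf μ K p h y ≤ SNorm μ K p h := le_iSup (Qf μ K p h) y

lemma enorm_le_of_norm_le {g h : G → ℂ} {c : ℝ} (hc : 0 ≤ c) (x : G)
    (hx : ‖g x‖ ≤ c * ‖h x‖) :
    (‖g x‖₊ : ℝ≥0∞) ≤ ENNReal.ofReal c * (‖h x‖₊ : ℝ≥0∞) := by
  rw [← enorm_eq_nnnorm, ← ofReal_norm, ← enorm_eq_nnnorm, ← ofReal_norm,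
    ← ENNReal.ofReal_mul hc]
  exact ENNReal.ofReal_le_ofReal hx

/-- Scaling/monotonicity for `Qf`. -/
lemma Qf_le_const_mul (μ : Measure G) (K : Set G) {p : ℝ} (hp : 1 ≤ p)
    {g h : G → ℂ} {c : ℝ} (hc : 0 ≤ c) (hgh : ∀ x, ‖g x‖ ≤ c * ‖h x‖) (y : G) :
    Qf μ K p g y ≤ ENNReal.ofReal c * Qf μ K p h y := by
  have hp0 : (0:ℝ) < p := lt_of_lt_of_le one_pos hp
  have hmono : (∫⁻ x in y +ᵥ K, (‖g x‖₊ : ℝ≥0∞) ^ p ∂μ)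
      ≤ ENNReal.ofReal c ^ p * ∫⁻ x in y +ᵥ K, (‖h x‖₊ : ℝ≥0∞) ^ p ∂μ := by
    rw [← lintegral_const_mul' _ _ (ENNReal.rpow_ne_top_of_nonneg hp0.le ENNReal.ofReal_ne_top)]
    refine lintegral_mono fun x => ?_
    rw [← ENNReal.mul_rpow_of_nonneg _ _ hp0.le]
    exact ENNReal.rpow_le_rpow (enorm_le_of_norm_le hc x (hgh x)) hp0.le
  have h2 : Qf μ K p g y ≤ ((ENNReal.ofReal c ^ p)
      * ((∫⁻ x in y +ᵥ K, (‖h x‖₊ : ℝ≥0∞) ^ p ∂μ) / μ K)) ^ (1/p) := by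
    refine ENNReal.rpow_le_rpow ?_ (by positivity)
    rw [← mul_div_assoc]
    exact ENNReal.div_le_div_right hmono _
  refine h2.trans (le_of_eq ?_)
  rw [ENNReal.mul_rpow_of_nonneg _ _ (by positivity), ← ENNReal.rpow_mul,
    mul_one_div, div_self hp0.ne', ENNReal.rpow_one]
  rfl

/-- Minkowski-type inequality for `Qf`. -/
lemma Qf_triangle (μ : Measure G) (K : Set G) {p : ℝ} (hp : 1 ≤ p)
    {u v w : G → ℂ} (hv : AEMeasurable v μ) (hw : AEMeasurable w μ)
    (huvw : ∀ x, ‖u x‖ ≤ ‖v x‖ + ‖w x‖) (y : G) :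
    Qf μ K p u y ≤ Qf μ K p v y + Qf μ K p w y := by
  have hp0 : (0:ℝ) < p := lt_of_lt_of_le one_pos hp
  set ν : Measure G := (μ K)⁻¹ • μ.restrict (y +ᵥ K) with hν
  have key : ∀ h : G → ℂ, Qf μ K p h y = (∫⁻ x, (‖h x‖₊ : ℝ≥0∞) ^ p ∂ν) ^ (1/p) := by
    intro h
    rw [hν, lintegral_smul_measure, Qf, ENNReal.div_eq_inv_mul, smul_eq_mul]
  have hvν : AEMeasurable (fun x => (‖v x‖₊ : ℝ≥0∞)) ν :=
    (hv.restrict.smul_measure _).enorm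
  have hwν : AEMeasurable (fun x => (‖w x‖₊ : ℝ≥0∞)) ν :=
    (hw.restrict.smul_measure _).enorm
  rw [key u, key v, key w]
  have step1 : (∫⁻ x, (‖u x‖₊ : ℝ≥0∞) ^ p ∂ν) ^ (1/p)
      ≤ (∫⁻ x, ((fun a => (‖v a‖₊ : ℝ≥0∞)) + fun a => (‖w a‖₊ : ℝ≥0∞)) x ^ p ∂ν) ^ (1/p) := by
    refine ENNReal.rpow_le_rpow (lintegral_mono fun x => ?_) (by positivity)
    refine ENNReal.rpow_le_rpow ?_ hp0.le
    show (‖u x‖₊ : ℝ≥0∞) ≤ (‖v x‖₊ : ℝ≥0∞) + (‖w x‖₊ : ℝ≥0∞)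
    rw [← enorm_eq_nnnorm, ← ofReal_norm, ← enorm_eq_nnnorm, ← ofReal_norm, ← enorm_eq_nnnorm, ← ofReal_norm,
      ← ENNReal.ofReal_add (norm_nonneg _) (norm_nonneg _)]
    exact ENNReal.ofReal_le_ofReal (huvw x)
  exact step1.trans (ENNReal.lintegral_Lp_add_le hvν hwν hp)

lemma image_sub_vadd (t y : G) (K : Set G) :
    (fun x => x - t) '' (y +ᵥ K) = (y - t) +ᵥ K := by
  ext x
  constructor
  · rintro ⟨a, ⟨k, hk, rfl⟩, rfl⟩
    refine ⟨k, hk, ?_⟩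
    show y - t + k = (y + k) - t
    abel
  · rintro ⟨k, hk, rfl⟩
    refine ⟨y + k, ⟨k, hk, rfl⟩, ?_⟩
    show (y + k) - t = y - t + k
    abel

lemma map_sub_restrict (μ : Measure G) [μ.IsAddHaarMeasure] (t : G) (A : Set G) :
    (μ.restrict A).map (fun x => x - t) = μ.restrict ((fun x => x - t) '' A) := by
  have hm : Measurable (fun x : G => x - t) := measurable_sub_const t
  ext B hB
  rw [Measure.map_apply hm hB, Measure.restrict_apply hB, Measure.restrict_apply (hm hB)]
  have hinv : ∀ S : Set G, μ ((fun x => x - t) '' S) = μ S := by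
    intro S
    have himg : (fun x : G => x - t) '' S = (fun x : G => x + t) ⁻¹' S := by
      ext x
      constructor
      · rintro ⟨a, ha, rfl⟩
        show a - t + t ∈ S
        rwa [sub_add_cancel]
      · intro hx
        exact ⟨x + t, hx, add_sub_cancel_right x t⟩
    rw [himg]
    exact (measurePreserving_add_right μ t).measure_preimage_emb
      (MeasurableEquiv.addRight t).measurableEmbedding S
  calc μ ((fun x => x - t) ⁻¹' B ∩ A)
      = μ ((fun x => x - t) '' ((fun x => x - t) ⁻¹' B ∩ A)) := (hinv _).symm
    _ = μ (B ∩ (fun x => x - t) '' A) := by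
        rw [Set.inter_comm, Set.image_inter_preimage, Set.inter_comm]

/-- Translation identity for `Qf`. -/
lemma Qf_translate (μ : Measure G) [μ.IsAddHaarMeasure] (K : Set G) (p : ℝ) {h : G → ℂ}
    (hh : AEMeasurable h μ) (t y : G) :
    Qf μ K p (Tt t h) y = Qf μ K p h (y - t) := by
  have hmap := map_sub_restrict μ t (y +ᵥ K)
  rw [image_sub_vadd t y K] at hmap
  have key : (∫⁻ x in y +ᵥ K, (‖Tt t h x‖₊ : ℝ≥0∞) ^ p ∂μ)
      = ∫⁻ x in (y - t) +ᵥ K, (‖h x‖₊ : ℝ≥0∞) ^ p ∂μ := by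
    have hF : AEMeasurable (fun x => (‖h x‖₊ : ℝ≥0∞) ^ p)
        ((μ.restrict (y +ᵥ K)).map (fun x => x - t)) := by
      rw [hmap]
      exact (hh.restrict.enorm).pow_const p
    calc ∫⁻ x in y +ᵥ K, (‖Tt t h x‖₊ : ℝ≥0∞) ^ p ∂μ
        = ∫⁻ x, (fun u => (‖h u‖₊ : ℝ≥0∞) ^ p) (x - t) ∂(μ.restrict (y +ᵥ K)) := rfl
      _ = ∫⁻ u, (‖h u‖₊ : ℝ≥0∞) ^ p ∂((μ.restrict (y +ᵥ K)).map (fun x => x - t)) :=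
          (lintegral_map' hF (measurable_sub_const t).aemeasurable).symm
      _ = _ := by rw [hmap]
  rw [Qf, Qf, key]

/-- `SNorm` comparison from a pointwise bound. -/
lemma SNorm_le_const_mul (μ : Measure G) (K : Set G) {p : ℝ} (hp : 1 ≤ p)
    {g h : G → ℂ} {c : ℝ} (hc : 0 ≤ c) (hgh : ∀ x, ‖g x‖ ≤ c * ‖h x‖) :
    SNorm μ K p g ≤ ENNReal.ofReal c * SNorm μ K p h := by
  rw [SNorm_eq_iSup_Qf, SNorm_eq_iSup_Qf]
  refine iSup_le fun y => (Qf_le_const_mul μ K hp hc hgh y).trans ?_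
  exact mul_le_mul_right (le_iSup _ y) _

lemma relativelyDense_mono {R R' : Set G} (h : R ⊆ R') (hR : RelativelyDense R) :
    RelativelyDense R' := by
  obtain ⟨C, hC, hRC⟩ := hR
  refine ⟨C, hC, subset_antisymm (Set.subset_univ _) ?_⟩
  rw [← hRC]
  exact Set.add_subset_add_right h

lemma aemeasurable_Tt (μ : Measure G) [μ.IsAddHaarMeasure] {h : G → ℂ}
    (hh : AEMeasurable h μ) (t : G) : AEMeasurable (Tt t h) μ :=
  hh.comp_quasiMeasurePreserving (measurePreserving_sub_right μ t).quasiMeasurePreserving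

/-- The truncation of a Stepanov a.p. function is Stepanov a.p. -/
lemma stepanovAP_trunc (μ : Measure G) [μ.IsAddHaarMeasure]
    {p : ℝ} (hp : 1 ≤ p) (K : Set G) {f : G → ℂ} (hap : StepanovAP μ K p f)
    {L : ℝ} (hL : 0 ≤ L) : StepanovAP μ K p (trunc L f) := by
  intro ε hε
  refine relativelyDense_mono ?_ (hap (ε/2) (by linarith))
  intro t ht
  simp only [Set.mem_setOf_eq] at ht ⊢
  have hpt : ∀ x, ‖(trunc L f - Tt t (trunc L f)) x‖ ≤ 2 * ‖(f - Tt t f) x‖ := by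
    intro x
    have : (trunc L f - Tt t (trunc L f)) x = cTrunc L (f x) - cTrunc L (f (x - t)) := rfl
    rw [this]
    exact cTrunc_lipschitz hL _ _
  calc SNorm μ K p (trunc L f - Tt t (trunc L f))
      ≤ ENNReal.ofReal 2 * SNorm μ K p (f - Tt t f) :=
        SNorm_le_const_mul μ K hp (by norm_num) hpt
    _ < ENNReal.ofReal 2 * ENNReal.ofReal (ε/2) := by
        rw [ENNReal.mul_lt_mul_iff_right (by norm_num) (by norm_num)]
        exact ht
    _ = ENNReal.ofReal ε := by
        rw [← ENNReal.ofReal_mul (by norm_num)]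
        congr 1
        ring

theorem stepanovAP_approx_bounded (μ : Measure G) [μ.IsAddHaarMeasure]
    (p : ℝ) (hp : 1 ≤ p) (K : Set G) (hK : IsCompact K) (hK' : (interior K).Nonempty)
    (f : G → ℂ) (hf : MemLpLoc μ p f) (hap : StepanovAP μ K p f)
    (ε : ℝ) (hε : 0 < ε) :
    ∃ L : ℕ, StepanovAP μ K p (trunc (L : ℝ) f) ∧
      (∀ x : G, ‖trunc (L : ℝ) f x‖ ≤ (L : ℝ)) ∧
      SNorm μ K p (f - trunc (L : ℝ) f) < ENNReal.ofReal ε := by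
  obtain ⟨hfm, hfi⟩ := hf
  have hfa : AEMeasurable f μ := hfm.aemeasurable
  have hp0 : (0:ℝ) < p := lt_of_lt_of_le one_pos hp
  have hK0 : μ K ≠ 0 := fun h =>
    absurd (measure_mono_null interior_subset h) (isOpen_interior.measure_ne_zero μ hK')
  have hKtop : μ K ≠ ⊤ := hK.measure_lt_top.ne
  -- the relatively dense set of ε/6-almost periods
  obtain ⟨C, hC, hRC⟩ := hap (ε/6) (by linarith)
  set D : Set G := C + K with hD
  have hDc : IsCompact D := hC.add hK
  -- the tail integrals over D tend to 0
  set T : ℕ → ℝ≥0∞ := fun L => ∫⁻ x in D, (‖f x - cTrunc (L : ℝ) (f x)‖₊ : ℝ≥0∞) ^ p ∂μ with hT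
  have hTend : Filter.Tendsto T Filter.atTop (nhds 0) := by
    set f' : G → ℂ := hfa.mk f with hf'
    have hf'm : Measurable f' := hfa.measurable_mk
    have hff' : f =ᵐ[μ] f' := hfa.ae_eq_mk
    have hTeq : ∀ L : ℕ, T L = ∫⁻ x in D, (‖f' x - cTrunc (L : ℝ) (f' x)‖₊ : ℝ≥0∞) ^ p ∂μ := by
      intro L
      exact lintegral_congr_ae (hff'.restrict.mono fun x hx => by dsimp only; rw [hx])
    have hbd : (∫⁻ x in D, (‖f' x‖₊ : ℝ≥0∞) ^ p ∂μ) ≠ ⊤ := by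
      have : (∫⁻ x in D, (‖f' x‖₊ : ℝ≥0∞) ^ p ∂μ) = ∫⁻ x in D, (‖f x‖₊ : ℝ≥0∞) ^ p ∂μ :=
        lintegral_congr_ae (hff'.restrict.mono fun x hx => by dsimp only; rw [hx])
      rw [this]
      exact (hfi D hDc).ne
    have := tendsto_lintegral_of_dominated_convergence
      (μ := μ.restrict D)
      (F := fun (L : ℕ) x => (‖f' x - cTrunc (L : ℝ) (f' x)‖₊ : ℝ≥0∞) ^ p)
      (f := fun _ => 0)
      (fun x => (‖f' x‖₊ : ℝ≥0∞) ^ p)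
      (fun L => ((hf'm.sub ((measurable_cTrunc (L:ℝ)).comp hf'm)).enorm).pow_const p)
      (fun L => Filter.Eventually.of_forall fun x =>
        ENNReal.rpow_le_rpow (by
          rw [← enorm_eq_nnnorm, ← ofReal_norm, ← enorm_eq_nnnorm, ← ofReal_norm]
          exact ENNReal.ofReal_le_ofReal (norm_sub_cTrunc_le (Nat.cast_nonneg L) (f' x)))
          hp0.le)
      hbd
      (Filter.Eventually.of_forall fun x => by
        have hev : ∀ᶠ L : ℕ in Filter.atTop,
            (‖f' x - cTrunc (L : ℝ) (f' x)‖₊ : ℝ≥0∞) ^ p = 0 := by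
          filter_upwards [Filter.eventually_ge_atTop ⌈‖f' x‖⌉₊] with L hL
          have : ‖f' x‖ ≤ (L : ℝ) := (Nat.le_ceil _).trans (Nat.cast_le.mpr hL)
          rw [cTrunc_of_le this, sub_self]
          simp [ENNReal.zero_rpow_of_pos hp0]
        exact Filter.Tendsto.congr' (hev.mono fun L h => h.symm) tendsto_const_nhds)
    simp only [lintegral_zero] at this
    exact Filter.Tendsto.congr (fun L => (hTeq L).symm) this
  -- pick L with small tail integral
  set δ : ℝ≥0∞ := μ K * (ENNReal.ofReal (ε/4)) ^ p with hδ
  have hδpos : 0 < δ := by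
    refine ENNReal.mul_pos hK0 ?_
    exact (ENNReal.rpow_pos (ENNReal.ofReal_pos.mpr (by linarith)) ENNReal.ofReal_ne_top).ne'
  obtain ⟨L, hL⟩ := (hTend.eventually (gt_mem_nhds hδpos)).exists
  refine ⟨L, stepanovAP_trunc μ hp K hap (Nat.cast_nonneg L), ?_, ?_⟩
  · intro x
    exact norm_cTrunc_le (Nat.cast_nonneg L) (f x)
  -- the main estimate
  set g : G → ℂ := f - trunc (L : ℝ) f with hg
  have hga : AEMeasurable g μ :=
    hfa.sub ((measurable_cTrunc (L:ℝ)).comp_aemeasurable hfa)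
  have hQbound : ∀ y : G, Qf μ K p g y ≤ ENNReal.ofReal (ε/2) + ENNReal.ofReal (ε/4) := by
    intro y
    have hy : y ∈ {t : G | SNorm μ K p (f - Tt t f) < ENNReal.ofReal (ε/6)} + C := by
      rw [hRC]; trivial
    obtain ⟨t, ht, c, hc, hyt⟩ := hy
    have ht' : SNorm μ K p (f - Tt t f) < ENNReal.ofReal (ε/6) := ht
    -- triangle: g ≤ (g - Tt t g) + Tt t g
    have htri : Qf μ K p g y ≤ Qf μ K p (g - Tt t g) y + Qf μ K p (Tt t g) y := by
      refine Qf_triangle μ K hp (hga.sub (aemeasurable_Tt μ hga t)) (aemeasurable_Tt μ hga t)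
        (fun x => ?_) y
      show ‖g x‖ ≤ ‖g x - g (x - t)‖ + ‖g (x - t)‖
      have h := norm_add_le (g x - g (x - t)) (g (x - t))
      rwa [sub_add_cancel] at h
    -- first term
    have hfirst : Qf μ K p (g - Tt t g) y ≤ ENNReal.ofReal (ε/2) := by
      have hpt : ∀ x, ‖(g - Tt t g) x‖ ≤ 3 * ‖(f - Tt t f) x‖ := by
        intro x
        have e1 : (g - Tt t g) x
            = (f x - f (x - t)) - (cTrunc (L:ℝ) (f x) - cTrunc (L:ℝ) (f (x - t))) := by
          show g x - g (x - t) = _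
          rw [hg]
          show (f x - cTrunc (L:ℝ) (f x)) - (f (x - t) - cTrunc (L:ℝ) (f (x - t))) = _
          ring
        rw [e1]
        have e2 : ‖(f - Tt t f) x‖ = ‖f x - f (x - t)‖ := rfl
        rw [e2]
        calc ‖(f x - f (x - t)) - (cTrunc (L:ℝ) (f x) - cTrunc (L:ℝ) (f (x - t)))‖
            ≤ ‖f x - f (x - t)‖ + ‖cTrunc (L:ℝ) (f x) - cTrunc (L:ℝ) (f (x - t))‖ :=
              norm_sub_le _ _
          _ ≤ ‖f x - f (x - t)‖ + 2 * ‖f x - f (x - t)‖ := by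
              have := cTrunc_lipschitz (L := (L:ℝ)) (Nat.cast_nonneg L) (f x) (f (x - t))
              linarith
          _ = 3 * ‖f x - f (x - t)‖ := by ring
      calc Qf μ K p (g - Tt t g) y
          ≤ ENNReal.ofReal 3 * Qf μ K p (f - Tt t f) y :=
            Qf_le_const_mul μ K hp (by norm_num) hpt y
        _ ≤ ENNReal.ofReal 3 * SNorm μ K p (f - Tt t f) :=
            mul_le_mul_right (Qf_le_SNorm μ K p _ y) _
        _ ≤ ENNReal.ofReal 3 * ENNReal.ofReal (ε/6) := mul_le_mul_right ht'.le _
        _ = ENNReal.ofReal (ε/2) := by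
            rw [← ENNReal.ofReal_mul (by norm_num)]
            congr 1
            ring
    -- second term
    have hsecond : Qf μ K p (Tt t g) y ≤ ENNReal.ofReal (ε/4) := by
      rw [Qf_translate μ K p hga t y]
      have hyc : y - t = c := by rw [← hyt]; exact add_sub_cancel_left t c
      rw [hyc]
      have hsub : c +ᵥ K ⊆ D := by
        rintro x ⟨k, hk, rfl⟩
        exact ⟨c, hc, k, hk, rfl⟩
      have hint : (∫⁻ x in c +ᵥ K, (‖g x‖₊ : ℝ≥0∞) ^ p ∂μ) ≤ T L := by
        refine (lintegral_mono_set hsub).trans (le_of_eq ?_)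
        rw [hT]
        refine lintegral_congr fun x => ?_
        rfl
      calc Qf μ K p g c ≤ (δ / μ K) ^ (1/p) := by
            refine ENNReal.rpow_le_rpow ?_ (by positivity)
            exact ENNReal.div_le_div_right (hint.trans hL.le) _
        _ = ENNReal.ofReal (ε/4) := by
            rw [hδ, mul_comm, mul_div_assoc, ENNReal.div_self hK0 hKtop, mul_one,
              ← ENNReal.rpow_mul, mul_one_div, div_self hp0.ne', ENNReal.rpow_one]
    calc Qf μ K p g y ≤ Qf μ K p (g - Tt t g) y + Qf μ K p (Tt t g) y := htri
      _ ≤ ENNReal.ofReal (ε/2) + ENNReal.ofReal (ε/4) := add_le_add hfirst hsecond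
  calc SNorm μ K p g = ⨆ y, Qf μ K p g y := rfl
    _ ≤ ENNReal.ofReal (ε/2) + ENNReal.ofReal (ε/4) := iSup_le hQbound
    _ = ENNReal.ofReal (3*ε/4) := by
        rw [← ENNReal.ofReal_add (by linarith) (by linarith)]
        congr 1
        ring
    _ < ENNReal.ofReal ε := (ENNReal.ofReal_lt_ofReal_iff hε).mpr (by linarith)
end
end

section
/- Let G be a second countable locally compact Abelian group and f ∈ L^p_loc(G). Then f is Stepanov p-almost periodic (has relatively dense ε-almost periods in ‖·‖_{S^p} for every ε > 0) if and only if the orbit {T_t f : t ∈ G} is precompact (totally bounded) in the ‖·‖_{S^p}-topology. -/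
open MeasureTheory Filter Topology
open scoped ENNReal Pointwise

noncomputable section

variable {G : Type*} [AddCommGroup G] [TopologicalSpace G] [IsTopologicalAddGroup G]
  [LocallyCompactSpace G] [MeasurableSpace G] [BorelSpace G]

set_option linter.unusedSectionVars false
set_option maxHeartbeats 1000000

section AuxiliaryLemmas

variable [SecondCountableTopology G] (μ : Measure G) [μ.IsAddHaarMeasure]

lemma mp_sub (t : G) : MeasurePreserving (fun x : G => x - t) μ μ := by
  simpa [sub_eq_add_neg] using measurePreserving_add_right μ (-t)

lemma emb_sub (t : G) : MeasurableEmbedding (fun x : G => x - t) :=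
  (MeasurableEquiv.subRight t).measurableEmbedding

lemma mem_vadd_set' {y x : G} {K : Set G} : x ∈ y +ᵥ K ↔ x - y ∈ K := by
  simp [Set.mem_vadd_set_iff_neg_vadd_mem, vadd_eq_add, neg_add_eq_sub]

lemma lint_trans (φ : G → ℝ≥0∞) (t y : G) (K : Set G) :
    ∫⁻ x in y +ᵥ K, φ (x - t) ∂μ = ∫⁻ x in (y - t) +ᵥ K, φ x ∂μ := by
  have hset : (fun x : G => x - t) ⁻¹' ((y - t) +ᵥ K) = y +ᵥ K := by
    ext x
    simp only [Set.mem_preimage, mem_vadd_set']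
    have : x - t - (y - t) = x - y := by abel
    rw [this]
  have h := (mp_sub μ t).setLIntegral_comp_preimage_emb (emb_sub t) φ ((y - t) +ᵥ K)
  rw [hset] at h
  exact h

lemma lint_trans_univ (φ : G → ℝ≥0∞) (t : G) :
    ∫⁻ x, φ (x - t) ∂μ = ∫⁻ x, φ x ∂μ :=
  (mp_sub μ t).lintegral_comp_emb (emb_sub t) φ

lemma aesm_Tt {f : G → ℂ} (hf : AEStronglyMeasurable f μ) (t : G) :
    AEStronglyMeasurable (Tt t f) μ :=
  hf.comp_measurePreserving (mp_sub μ t)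

/-- The local windowed seminorm. -/
def LN (μ : Measure G) (K : Set G) (p : ℝ) (y : G) (g : G → ℂ) : ℝ≥0∞ :=
  ((∫⁻ x in y +ᵥ K, (‖g x‖₊ : ℝ≥0∞) ^ p ∂μ) / μ K) ^ (1 / p)

variable {K : Set G} {p : ℝ}

lemma SNorm_eq_iSup (g : G → ℂ) : SNorm μ K p g = ⨆ y, LN μ K p y g := rfl

lemma LN_le_SNorm (g : G → ℂ) (y : G) : LN μ K p y g ≤ SNorm μ K p g := by
  rw [SNorm_eq_iSup]; exact le_iSup (fun y => LN μ K p y g) y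

lemma LN_congr_nnnorm {g h : G → ℂ} (hgh : ∀ x, ‖g x‖₊ = ‖h x‖₊) (y : G) :
    LN μ K p y g = LN μ K p y h := by
  unfold LN
  rw [lintegral_congr fun x => by rw [hgh x]]

lemma SNorm_congr_nnnorm {g h : G → ℂ} (hgh : ∀ x, ‖g x‖₊ = ‖h x‖₊) :
    SNorm μ K p g = SNorm μ K p h := by
  unfold SNorm
  exact iSup_congr fun y => by rw [show (fun x => ((‖g x‖₊ : ℝ≥0∞)) ^ p)
    = fun x => ((‖h x‖₊ : ℝ≥0∞)) ^ p from funext fun x => by rw [hgh x]]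

lemma LN_Tt (g : G → ℂ) (t y : G) : LN μ K p y (Tt t g) = LN μ K p (y - t) g := by
  unfold LN Tt
  rw [lint_trans μ (fun x => ((‖g x‖₊ : ℝ≥0∞)) ^ p) t y K]

lemma SNorm_Tt (g : G → ℂ) (t : G) : SNorm μ K p (Tt t g) = SNorm μ K p g := by
  rw [SNorm_eq_iSup, SNorm_eq_iSup]
  have h : ∀ y, LN μ K p y (Tt t g) = LN μ K p (y - t) g := LN_Tt μ g t
  simp_rw [h]
  exact (Equiv.subRight t).iSup_comp (g := fun y => LN μ K p y g)

lemma LN_eq_eLpNorm' (hp : 0 < p) (g : G → ℂ) (y : G) :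
    LN μ K p y g = eLpNorm' g p (μ.restrict (y +ᵥ K)) / (μ K) ^ (1 / p) := by
  rw [LN, eLpNorm', ENNReal.div_rpow_of_nonneg _ _ (one_div_nonneg.2 hp.le)]; rfl

lemma LN_add_le (hp : 1 ≤ p) {g h : G → ℂ} (hg : AEStronglyMeasurable g μ)
    (hh : AEStronglyMeasurable h μ) (y : G) :
    LN μ K p y (fun x => g x + h x) ≤ LN μ K p y g + LN μ K p y h := by
  have hp0 : 0 < p := lt_of_lt_of_le one_pos hp
  rw [LN_eq_eLpNorm' μ hp0, LN_eq_eLpNorm' μ hp0, LN_eq_eLpNorm' μ hp0]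
  have tri : eLpNorm' (g + h) p (μ.restrict (y +ᵥ K)) ≤
      eLpNorm' g p (μ.restrict (y +ᵥ K)) + eLpNorm' h p (μ.restrict (y +ᵥ K)) :=
    eLpNorm'_add_le hg.restrict hh.restrict hp
  calc eLpNorm' (fun x => g x + h x) p (μ.restrict (y +ᵥ K)) / μ K ^ (1/p)
      ≤ (eLpNorm' g p (μ.restrict (y +ᵥ K)) + eLpNorm' h p (μ.restrict (y +ᵥ K))) / μ K ^ (1/p) := by
        gcongr
        exact tri
    _ = _ := by rw [ENNReal.add_div]

lemma SNorm_add_le (hp : 1 ≤ p) {g h : G → ℂ} (hg : AEStronglyMeasurable g μ)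
    (hh : AEStronglyMeasurable h μ) :
    SNorm μ K p (fun x => g x + h x) ≤ SNorm μ K p g + SNorm μ K p h := by
  rw [SNorm_eq_iSup]
  exact iSup_le fun y => (LN_add_le μ hp hg hh y).trans
    (add_le_add (LN_le_SNorm μ g y) (LN_le_SNorm μ h y))

/-- translates of a compactly supported continuous function are uniformly close near 0 -/
lemma exists_nhds_translate_small (g : G → ℂ) (hgc : Continuous g) (hgs : HasCompactSupport g)
    {ε : ℝ} (hε : 0 < ε) {W : Set G} (hWc : IsCompact W) (hWn : W ∈ 𝓝 (0:G)) :
    ∃ V ∈ 𝓝 (0:G), V ⊆ W ∧ ∀ u ∈ V, ∀ x, ‖g x - g (x - u)‖ ≤ ε := by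
  have key : ∀ x : G, ∃ V ∈ 𝓝 (0:G), ∃ O : Set G, O ∈ 𝓝 x ∧
      ∀ u ∈ V, ∀ y ∈ O, ‖g y - g (y - u)‖ ≤ ε := by
    intro x
    have hc : Continuous fun q : G × G => ‖g q.2 - g (q.2 - q.1)‖ :=
      ((hgc.comp continuous_snd).sub (hgc.comp (continuous_snd.sub continuous_fst))).norm
    have hopen : IsOpen {q : G × G | ‖g q.2 - g (q.2 - q.1)‖ < ε} :=
      isOpen_lt hc continuous_const
    have hmem : ((0 : G), x) ∈ {q : G × G | ‖g q.2 - g (q.2 - q.1)‖ < ε} := by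
      simp [hε]
    have hnhds : {q : G × G | ‖g q.2 - g (q.2 - q.1)‖ < ε} ∈ 𝓝 ((0:G), x) :=
      hopen.mem_nhds hmem
    rw [mem_nhds_prod_iff] at hnhds
    obtain ⟨V, hV, O, hO, hVO⟩ := hnhds
    refine ⟨V, hV, O, hO, fun u hu y hy => ?_⟩
    have h2 : (u, y) ∈ V ×ˢ O := Set.mk_mem_prod hu hy
    have h3 := hVO h2
    simp only [Set.mem_setOf_eq] at h3
    exact le_of_lt h3
  choose V hV O hO hVO using key
  set T := tsupport g + W with hT
  have hTc : IsCompact T := IsCompact.add hgs hWc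
  obtain ⟨t, hcover⟩ := hTc.elim_nhds_subcover O (fun x _ => hO x)
  refine ⟨(⋂ x ∈ t, V x) ∩ W, ?_, Set.inter_subset_right, ?_⟩
  · exact Filter.inter_mem (Filter.biInter_finset_mem t |>.2 fun x _ => hV x) hWn
  · rintro u ⟨huV, huW⟩ x
    by_cases hx : x ∈ T
    · obtain ⟨x₀, hx₀t, hxO⟩ := Set.mem_iUnion₂.1 (hcover.2 hx)
      exact hVO x₀ u (Set.mem_iInter₂.1 huV x₀ hx₀t) x hxO
    · have h1 : g x = 0 := by
        by_contra h
        have := Set.add_mem_add (subset_tsupport g h) (mem_of_mem_nhds hWn)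
        rw [add_zero] at this
        exact hx this
      have h2 : g (x - u) = 0 := by
        by_contra h
        have : x ∈ tsupport g + W := by
          have : (x - u) + u ∈ tsupport g + W := Set.add_mem_add (subset_tsupport g h) huW
          simpa using this
        exact hx this
      simp [h1, h2, hε.le]

lemma exists_ofReal_le {c : ℝ≥0∞} (hc : 0 < c) : ∃ r : ℝ, 0 < r ∧ ENNReal.ofReal r ≤ c := by
  rcases eq_or_ne c ⊤ with rfl | hct
  · exact ⟨1, one_pos, le_top⟩
  · exact ⟨c.toReal, ENNReal.toReal_pos hc.ne' hct, by rw [ENNReal.ofReal_toReal hct]⟩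

lemma trans_cont {p : ℝ} (hp : 1 ≤ p) {f : G → ℂ} (hf : MemLpLoc μ p f)
    {B : Set G} (hB : IsCompact B) {η : ℝ≥0∞} (hη0 : η ≠ 0) (hηt : η ≠ ⊤) :
    ∃ U ∈ 𝓝 (0:G), ∀ u ∈ U, ∫⁻ x in B, (‖f x - f (x - u)‖₊ : ℝ≥0∞) ^ p ∂μ ≤ η := by
  have hp0 : 0 < p := lt_of_lt_of_le one_pos hp
  -- a compact symmetric neighborhood of 0
  obtain ⟨W₀, hW₀c, hW₀n⟩ := exists_compact_mem_nhds (0:G)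
  set W := W₀ + -W₀ with hWdef
  have hWc : IsCompact W := hW₀c.add hW₀c.neg
  have h0W₀ : (0:G) ∈ W₀ := mem_of_mem_nhds hW₀n
  have h0W₀' : (0:G) ∈ -W₀ := by simpa using h0W₀
  have hWn : W ∈ 𝓝 (0:G) := Filter.mem_of_superset hW₀n
    (fun w hw => ⟨w, hw, 0, h0W₀', add_zero w⟩)
  have h0W : (0:G) ∈ W := mem_of_mem_nhds hWn
  have hWsymm : ∀ u ∈ W, -u ∈ W := by
    rintro u ⟨a, ha, b, hb, rfl⟩
    exact ⟨-b, by simpa using hb, -a, by simpa using ha, (neg_add_rev a b).symm⟩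
  -- enlarged compact measurable sets
  set D := closure (B + W) with hDdef
  have hDc : IsCompact D := (hB.add hWc).closure
  have hDm : MeasurableSet D := isClosed_closure.measurableSet
  have hBD : B ⊆ D := fun b hb => subset_closure ⟨b, hb, 0, h0W, add_zero b⟩
  set E := closure (D + W) with hEdef
  have hEc : IsCompact E := (hDc.add hWc).closure
  have hEm : MeasurableSet E := isClosed_closure.measurableSet
  have hDE : D ⊆ E := fun d hd => subset_closure ⟨d, hd, 0, h0W, add_zero d⟩
  have hsub : ∀ x ∈ D, ∀ u ∈ W, x - u ∈ E := fun x hx u hu =>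
    subset_closure ⟨x, hx, -u, hWsymm u hu, (sub_eq_add_neg x u).symm⟩
  -- the cut-off function
  set f₀ := E.indicator f with hf₀def
  have hf₀m : AEStronglyMeasurable f₀ μ := hf.1.indicator hEm
  have hind : ∀ x, (‖f₀ x‖₊ : ℝ≥0∞) ^ p = E.indicator (fun x => (‖f x‖₊ : ℝ≥0∞) ^ p) x := by
    intro x
    by_cases hx : x ∈ E
    · simp [hf₀def, Set.indicator_of_mem hx]
    · simp [hf₀def, Set.indicator_of_notMem hx, ENNReal.zero_rpow_of_pos hp0]
  have hE_int : ∫⁻ x, (‖f₀ x‖₊ : ℝ≥0∞) ^ p ∂μ < ⊤ := by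
    rw [lintegral_congr hind, lintegral_indicator hEm]
    exact hf.2 E hEc
  have hmem : MemLp f₀ (ENNReal.ofReal p) μ := by
    refine ⟨hf₀m, ?_⟩
    rw [eLpNorm_eq_eLpNorm' (by simpa [ENNReal.ofReal_eq_zero, not_le] using hp0)
      ENNReal.ofReal_ne_top, ENNReal.toReal_ofReal hp0.le, eLpNorm']
    exact ENNReal.rpow_lt_top_of_nonneg (by positivity) hE_int.ne
  -- the target bounds
  set ρ := η ^ (1/p) with hρdef
  have hρ0 : ρ ≠ 0 := by
    simp only [hρdef, Ne, ENNReal.rpow_eq_zero_iff, not_or]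
    constructor
    · rintro ⟨h, _⟩; exact hη0 h
    · rintro ⟨h, _⟩; exact hηt h
  have hρt : ρ ≠ ⊤ := ENNReal.rpow_ne_top_of_nonneg (by positivity) hηt
  set θ := ρ / 3 with hθdef
  have hθ0 : θ ≠ 0 := by
    simp [hθdef, ENNReal.div_eq_zero_iff, hρ0]
  have h3θ : θ + θ + θ ≤ ρ := by
    have : θ + θ + θ = 3 * (ρ / 3) := by rw [hθdef]; ring
    rw [this]
    exact ENNReal.mul_div_le
  -- approximation by a continuous compactly supported function
  obtain ⟨g, hg_supp, hg_close, hg_cont, _⟩ :=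
    hmem.exists_hasCompactSupport_eLpNorm_sub_le ENNReal.ofReal_ne_top hθ0
  have hgm : AEStronglyMeasurable g μ := hg_cont.aestronglyMeasurable
  have hgsub : eLpNorm' (fun x => f₀ x - g x) p μ ≤ θ := by
    have : eLpNorm (f₀ - g) (ENNReal.ofReal p) μ = eLpNorm' (f₀ - g) p μ := by
      rw [eLpNorm_eq_eLpNorm' (by simpa [ENNReal.ofReal_eq_zero, not_le] using hp0)
        ENNReal.ofReal_ne_top, ENNReal.toReal_ofReal hp0.le]
    rw [this] at hg_close
    exact hg_close
  -- support of the translates of g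
  set S' := closure (tsupport g + W) with hS'def
  have hS'c : IsCompact S' := (IsCompact.add hg_supp hWc).closure
  have hS'm : MeasurableSet S' := isClosed_closure.measurableSet
  set M := μ S' ^ (1/p) with hMdef
  have hMt : M ≠ ⊤ := ENNReal.rpow_ne_top_of_nonneg (by positivity) hS'c.measure_lt_top.ne
  have hθM : 0 < θ / M := ENNReal.div_pos hθ0 hMt
  obtain ⟨r, hr0, hrle⟩ := exists_ofReal_le hθM
  obtain ⟨V, hVn, hVW, hVsmall⟩ :=
    exists_nhds_translate_small g hg_cont hg_supp hr0 hWc hWn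
  refine ⟨V, hVn, fun u hu => ?_⟩
  have huW : u ∈ W := hVW hu
  -- the middle term bound
  have hmid : eLpNorm' (fun x => g x - g (x - u)) p μ ≤ θ := by
    have hzero : ∀ x, x ∉ S' → g x - g (x - u) = 0 := by
      intro x hx
      have h1 : g x = 0 := by
        by_contra h
        have := Set.add_mem_add (subset_tsupport g h) h0W
        rw [add_zero] at this
        exact hx (subset_closure this)
      have h2 : g (x - u) = 0 := by
        by_contra h
        have h3 := Set.add_mem_add (subset_tsupport g h) huW
        have : x ∈ tsupport g + W := by simpa using h3
        exact hx (subset_closure this)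
      rw [h1, h2, sub_zero]
    have hindg : ∀ x, (‖g x - g (x - u)‖₊ : ℝ≥0∞) ^ p
        = S'.indicator (fun x => (‖g x - g (x - u)‖₊ : ℝ≥0∞) ^ p) x := by
      intro x
      by_cases hx : x ∈ S'
      · rw [Set.indicator_of_mem hx]
      · rw [Set.indicator_of_notMem hx, hzero x hx]
        simp [ENNReal.zero_rpow_of_pos hp0]
    have hbound : ∫⁻ x, (‖g x - g (x - u)‖₊ : ℝ≥0∞) ^ p ∂μ
        ≤ ENNReal.ofReal r ^ p * μ S' := by
      rw [lintegral_congr hindg, lintegral_indicator hS'm]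
      calc ∫⁻ x in S', (‖g x - g (x - u)‖₊ : ℝ≥0∞) ^ p ∂μ
          ≤ ∫⁻ _ in S', ENNReal.ofReal r ^ p ∂μ := by
            refine lintegral_mono fun x => ?_
            refine ENNReal.rpow_le_rpow ?_ hp0.le
            rw [show ((‖g x - g (x - u)‖₊ : ℝ≥0∞)) = ENNReal.ofReal ‖g x - g (x - u)‖ from (ofReal_norm _).symm]
            exact ENNReal.ofReal_le_ofReal (hVsmall u hu x)
        _ = ENNReal.ofReal r ^ p * μ S' := setLIntegral_const _ _
    calc eLpNorm' (fun x => g x - g (x - u)) p μ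
        ≤ (ENNReal.ofReal r ^ p * μ S') ^ (1/p) := by
          rw [eLpNorm']
          exact ENNReal.rpow_le_rpow hbound (by positivity)
      _ = ENNReal.ofReal r * M := by
          rw [ENNReal.mul_rpow_of_nonneg _ _ (by positivity), ← ENNReal.rpow_mul,
            mul_one_div_cancel hp0.ne', ENNReal.rpow_one, hMdef]
      _ ≤ (θ / M) * M := by gcongr
      _ ≤ θ := by rw [mul_comm]; exact ENNReal.mul_div_le
  -- measurability of the pieces
  have hTu : ∀ (h : G → ℂ), AEStronglyMeasurable h μ →
      AEStronglyMeasurable (fun x => h (x - u)) μ := fun h hh =>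
    hh.comp_measurePreserving (mp_sub μ u)
  have haesm1 : AEStronglyMeasurable (fun x => f₀ x - g x) μ := hf₀m.sub hgm
  have haesm2 : AEStronglyMeasurable (fun x => g x - g (x - u)) μ := hgm.sub (hTu g hgm)
  have haesm3 : AEStronglyMeasurable (fun x => g (x - u) - f₀ (x - u)) μ :=
    (hTu g hgm).sub (hTu f₀ hf₀m)
  -- the last term equals the first one
  have hlast : eLpNorm' (fun x => g (x - u) - f₀ (x - u)) p μ
      = eLpNorm' (fun x => f₀ x - g x) p μ := by
    rw [eLpNorm', eLpNorm']
    congr 1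
    have h1 : ∫⁻ x, (‖g (x - u) - f₀ (x - u)‖₊ : ℝ≥0∞) ^ p ∂μ
        = ∫⁻ x, (‖g x - f₀ x‖₊ : ℝ≥0∞) ^ p ∂μ :=
      lint_trans_univ μ (fun y => (‖g y - f₀ y‖₊ : ℝ≥0∞) ^ p) u
    refine h1.trans ?_
    exact lintegral_congr fun x => congrArg (fun z : NNReal => (z : ℝ≥0∞) ^ p) (by rw [← nnnorm_neg (g x - f₀ x), neg_sub])
  -- triangle inequality
  have htri : eLpNorm' (fun x => f₀ x - f₀ (x - u)) p μ ≤ θ + θ + θ := by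
    have hdecomp : (fun x => f₀ x - f₀ (x - u)) = fun x =>
        ((f₀ x - g x) + (g x - g (x - u))) + (g (x - u) - f₀ (x - u)) := by
      funext x; ring
    rw [hdecomp]
    have step1 : eLpNorm' (fun x =>
        ((f₀ x - g x) + (g x - g (x - u))) + (g (x - u) - f₀ (x - u))) p μ
        ≤ eLpNorm' (fun x => (f₀ x - g x) + (g x - g (x - u))) p μ
          + eLpNorm' (fun x => g (x - u) - f₀ (x - u)) p μ :=
      eLpNorm'_add_le (haesm1.add haesm2) haesm3 hp
    have step2 : eLpNorm' (fun x => (f₀ x - g x) + (g x - g (x - u))) p μ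
        ≤ eLpNorm' (fun x => f₀ x - g x) p μ + eLpNorm' (fun x => g x - g (x - u)) p μ :=
      eLpNorm'_add_le haesm1 haesm2 hp
    calc eLpNorm' (fun x =>
        ((f₀ x - g x) + (g x - g (x - u))) + (g (x - u) - f₀ (x - u))) p μ
        ≤ (eLpNorm' (fun x => f₀ x - g x) p μ + eLpNorm' (fun x => g x - g (x - u)) p μ)
          + eLpNorm' (fun x => g (x - u) - f₀ (x - u)) p μ :=
          step1.trans (add_le_add step2 le_rfl)
      _ ≤ θ + θ + θ := by
          rw [hlast]
          exact add_le_add (add_le_add hgsub hmid) hgsub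
  -- final chain
  calc ∫⁻ x in B, (‖f x - f (x - u)‖₊ : ℝ≥0∞) ^ p ∂μ
      ≤ ∫⁻ x in D, (‖f x - f (x - u)‖₊ : ℝ≥0∞) ^ p ∂μ :=
        lintegral_mono' (Measure.restrict_mono hBD le_rfl) le_rfl
    _ = ∫⁻ x in D, (‖f₀ x - f₀ (x - u)‖₊ : ℝ≥0∞) ^ p ∂μ := by
        refine setLIntegral_congr_fun hDm (fun x hx => ?_)
        rw [hf₀def, Set.indicator_of_mem (hDE hx), Set.indicator_of_mem (hsub x hx u huW)]
    _ ≤ ∫⁻ x, (‖f₀ x - f₀ (x - u)‖₊ : ℝ≥0∞) ^ p ∂μ := setLIntegral_le_lintegral _ _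
    _ = (eLpNorm' (fun x => f₀ x - f₀ (x - u)) p μ) ^ p := by
        rw [eLpNorm', ← ENNReal.rpow_mul, one_div_mul_cancel hp0.ne', ENNReal.rpow_one]; rfl
    _ ≤ ρ ^ p := ENNReal.rpow_le_rpow (htri.trans h3θ) hp0.le
    _ = η := by
        rw [hρdef, ← ENNReal.rpow_mul, one_div_mul_cancel hp0.ne', ENNReal.rpow_one]

end AuxiliaryLemmas

theorem stepanovAP_iff_totallyBounded [SecondCountableTopology G]
    (μ : Measure G) [μ.IsAddHaarMeasure]
    (p : ℝ) (hp : 1 ≤ p) (K : Set G) (hK : IsCompact K) (hK' : (interior K).Nonempty)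
    (f : G → ℂ) (hf : MemLpLoc μ p f) :
    StepanovAP μ K p f ↔
      ∀ ε : ℝ, 0 < ε → ∃ s : Finset G, ∀ t : G, ∃ z ∈ s,
        SNorm μ K p (Tt t f - Tt z f) < ENNReal.ofReal ε := by
  have hp0 : 0 < p := lt_of_lt_of_le one_pos hp
  have hK0 : μ K ≠ 0 := (μ.measure_pos_of_nonempty_interior hK').ne'
  have hKt : μ K ≠ ⊤ := hK.measure_lt_top.ne
  constructor
  · -- almost periodicity implies total boundedness of the orbit
    intro hAP ε hε
    set δ := ε / 5 with hδdef
    have hδ0 : 0 < δ := by positivity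
    obtain ⟨C, hC, hRC⟩ := hAP δ hδ0
    set R := {t : G | SNorm μ K p (f - Tt t f) < ENNReal.ofReal δ} with hRdef
    -- Step 1: translation continuity on the compact set C + K
    have hη0 : (ENNReal.ofReal δ) ^ p * μ K ≠ 0 := by
      apply mul_ne_zero _ hK0
      simp only [Ne, ENNReal.rpow_eq_zero_iff, not_or]
      constructor
      · rintro ⟨h, -⟩
        rw [ENNReal.ofReal_eq_zero] at h
        linarith
      · rintro ⟨h, -⟩
        exact ENNReal.ofReal_ne_top h
    have hηt : (ENNReal.ofReal δ) ^ p * μ K ≠ ⊤ :=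
      ENNReal.mul_ne_top (ENNReal.rpow_ne_top_of_nonneg hp0.le ENNReal.ofReal_ne_top) hKt
    obtain ⟨U₁, hU₁n, hU₁⟩ := trans_cont μ hp hf (hC.add hK)
      (η := (ENNReal.ofReal δ) ^ p * μ K) hη0 hηt
    -- Step 2: all windows centered in C are uniformly small
    have hC_window : ∀ u ∈ U₁, ∀ c ∈ C, LN μ K p c (f - Tt u f) ≤ ENNReal.ofReal δ := by
      intro u hu c hc
      have hsub : c +ᵥ K ⊆ C + K := by
        intro x hx
        rw [mem_vadd_set'] at hx
        exact ⟨c, hc, x - c, hx, by show c + (x - c) = x; abel⟩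
      have hint : ∫⁻ x in c +ᵥ K, (‖(f - Tt u f) x‖₊ : ℝ≥0∞) ^ p ∂μ
          ≤ (ENNReal.ofReal δ) ^ p * μ K := by
        refine le_trans (lintegral_mono' (Measure.restrict_mono hsub le_rfl) le_rfl) ?_
        have h2 := hU₁ u hu
        have h3 : ∀ x, (‖(f - Tt u f) x‖₊ : ℝ≥0∞) ^ p = (‖f x - f (x - u)‖₊ : ℝ≥0∞) ^ p := by
          intro x; simp [Tt]
        rw [lintegral_congr fun x => h3 x]
        exact h2
      unfold LN
      calc ((∫⁻ x in c +ᵥ K, (‖(f - Tt u f) x‖₊ : ℝ≥0∞) ^ p ∂μ) / μ K) ^ (1/p)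
          ≤ ((ENNReal.ofReal δ) ^ p * μ K / μ K) ^ (1/p) := by
            gcongr
        _ = ENNReal.ofReal δ := by
            rw [mul_div_assoc, ENNReal.div_self hK0 hKt, mul_one, ← ENNReal.rpow_mul,
              mul_one_div_cancel hp0.ne', ENNReal.rpow_one]
    -- Step 3: the Stepanov seminorm of f - Tt u f is small for u near 0
    have hpsi : ∀ u ∈ U₁, SNorm μ K p (f - Tt u f)
        ≤ ENNReal.ofReal δ + ENNReal.ofReal δ + ENNReal.ofReal δ := by
      intro u hu
      rw [SNorm_eq_iSup]
      refine iSup_le fun y => ?_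
      have hy : y ∈ R + C := by rw [hRC]; trivial
      obtain ⟨r, hr, c, hc, hrc⟩ := hy
      have hrc' : r + c = y := hrc
      have hyc : y - r = c := by rw [← hrc']; abel
      have hdec : ∀ x, ‖(f - Tt u f) x‖₊ =
          ‖((f - Tt r f) x + Tt r (f - Tt u f) x) + (- Tt u (f - Tt r f) x)‖₊ := by
        intro x
        simp only [Pi.sub_apply, Tt]
        have h4 : x - r - u = x - u - r := by abel
        rw [h4]
        congr 1
        ring
      have haesm0 : AEStronglyMeasurable (fun x => (f - Tt r f) x) μ :=
        hf.1.sub (aesm_Tt μ hf.1 r)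
      have haesmu : AEStronglyMeasurable (fun x => (f - Tt u f) x) μ :=
        hf.1.sub (aesm_Tt μ hf.1 u)
      calc LN μ K p y (f - Tt u f)
          = LN μ K p y (fun x => ((f - Tt r f) x + Tt r (f - Tt u f) x)
              + (- Tt u (f - Tt r f) x)) := LN_congr_nnnorm μ hdec y
        _ ≤ LN μ K p y (fun x => (f - Tt r f) x + Tt r (f - Tt u f) x)
              + LN μ K p y (fun x => - Tt u (f - Tt r f) x) := by
            refine LN_add_le μ hp (haesm0.add ?_) ?_ y
            · exact aesm_Tt μ haesmu r
            · exact (aesm_Tt μ haesm0 u).neg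
        _ ≤ (LN μ K p y (f - Tt r f) + LN μ K p y (Tt r (f - Tt u f)))
              + LN μ K p y (Tt u (f - Tt r f)) := by
            refine add_le_add ?_ ?_
            · exact LN_add_le μ hp haesm0 (aesm_Tt μ haesmu r) y
            · refine le_of_eq (LN_congr_nnnorm μ (fun x => ?_) y)
              rw [nnnorm_neg]
        _ ≤ (ENNReal.ofReal δ + ENNReal.ofReal δ) + ENNReal.ofReal δ := by
            refine add_le_add (add_le_add ?_ ?_) ?_
            · exact (LN_le_SNorm μ _ y).trans (le_of_lt hr)
            · rw [LN_Tt, hyc]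
              exact hC_window u hu c hc
            · refine (LN_le_SNorm μ _ y).trans ?_
              rw [SNorm_Tt]
              exact le_of_lt hr
    -- Step 4: cover C by finitely many translates
    obtain ⟨V, hVU, hVopen, hV0⟩ := mem_nhds_iff.1 hU₁n
    have hnhds : ∀ z ∈ C, z +ᵥ V ∈ 𝓝 z := by
      intro z _
      have hopen : IsOpen (z +ᵥ V) := by
        have hpre : z +ᵥ V = (fun x => x - z) ⁻¹' V := by
          ext x; rw [Set.mem_preimage, mem_vadd_set']
        rw [hpre]
        exact hVopen.preimage (continuous_id.sub continuous_const)
      refine hopen.mem_nhds ?_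
      rw [mem_vadd_set', sub_self]
      exact hV0
    obtain ⟨s, hs⟩ := hC.elim_nhds_subcover (fun z => z +ᵥ V) hnhds
    refine ⟨s, fun τ => ?_⟩
    have hτ : τ ∈ R + C := by rw [hRC]; trivial
    obtain ⟨r, hr, c, hc, hrc⟩ := hτ
    have hrc' : r + c = τ := hrc
    obtain ⟨z, hzs, hcz⟩ := Set.mem_iUnion₂.1 (hs.2 hc)
    have hcu : c - z ∈ U₁ := hVU (mem_vadd_set'.1 hcz)
    refine ⟨z, hzs, ?_⟩
    have e1 : SNorm μ K p (fun x => Tt τ f x - Tt c f x) = SNorm μ K p (f - Tt r f) := by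
      have h5 : ∀ x, ‖Tt τ f x - Tt c f x‖₊ = ‖Tt c (fun w => (f - Tt r f) w) x‖₊ := by
        intro x
        simp only [Tt, Pi.sub_apply]
        have h6 : x - τ = x - c - r := by rw [← hrc']; abel
        rw [h6, ← nnnorm_neg]
        congr 1
        ring
      rw [SNorm_congr_nnnorm μ h5, SNorm_Tt]
    have e2 : SNorm μ K p (fun x => Tt c f x - Tt z f x)
        = SNorm μ K p (f - Tt (c - z) f) := by
      have h5 : ∀ x, ‖Tt c f x - Tt z f x‖₊ = ‖Tt z (fun w => (f - Tt (c - z) f) w) x‖₊ := by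
        intro x
        simp only [Tt, Pi.sub_apply]
        have h6 : x - c = x - z - (c - z) := by abel
        rw [h6, ← nnnorm_neg]
        congr 1
        ring
      rw [SNorm_congr_nnnorm μ h5, SNorm_Tt]
    have haesmτ : AEStronglyMeasurable (fun x => Tt τ f x - Tt c f x) μ :=
      (aesm_Tt μ hf.1 τ).sub (aesm_Tt μ hf.1 c)
    have haesmz : AEStronglyMeasurable (fun x => Tt c f x - Tt z f x) μ :=
      (aesm_Tt μ hf.1 c).sub (aesm_Tt μ hf.1 z)
    calc SNorm μ K p (Tt τ f - Tt z f)
        = SNorm μ K p (fun x => (Tt τ f x - Tt c f x) + (Tt c f x - Tt z f x)) := by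
          refine SNorm_congr_nnnorm μ fun x => ?_
          simp only [Pi.sub_apply]
          congr 1
          ring
      _ ≤ SNorm μ K p (fun x => Tt τ f x - Tt c f x)
            + SNorm μ K p (fun x => Tt c f x - Tt z f x) :=
          SNorm_add_le μ hp haesmτ haesmz
      _ ≤ ENNReal.ofReal δ + (ENNReal.ofReal δ + ENNReal.ofReal δ + ENNReal.ofReal δ) := by
          refine add_le_add ?_ ?_
          · rw [e1]; exact le_of_lt hr
          · rw [e2]; exact hpsi (c - z) hcu
      _ < ENNReal.ofReal ε := by
          have hmerge : ENNReal.ofReal δ + (ENNReal.ofReal δ + ENNReal.ofReal δ + ENNReal.ofReal δ)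
              = ENNReal.ofReal (δ + (δ + δ + δ)) := by
            rw [← ENNReal.ofReal_add hδ0.le hδ0.le, ← ENNReal.ofReal_add (by positivity) hδ0.le,
              ← ENNReal.ofReal_add hδ0.le (by positivity)]
          rw [hmerge, ENNReal.ofReal_lt_ofReal_iff hε, hδdef]
          linarith
  · -- total boundedness implies almost periodicity
    intro h ε hε
    obtain ⟨s, hs⟩ := h ε hε
    refine ⟨(s : Set G), s.finite_toSet.isCompact, ?_⟩
    rw [Set.eq_univ_iff_forall]
    intro τ
    obtain ⟨z, hzs, hz⟩ := hs τ
    have e : SNorm μ K p (f - Tt (τ - z) f) = SNorm μ K p (Tt τ f - Tt z f) := by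
      rw [← SNorm_Tt μ (f - Tt (τ - z) f) z]
      refine SNorm_congr_nnnorm μ fun x => ?_
      simp only [Tt, Pi.sub_apply]
      have h6 : x - z - (τ - z) = x - τ := by abel
      rw [h6, ← nnnorm_neg]
      congr 1
      ring
    refine Set.mem_add.2 ⟨τ - z, ?_, z, hzs, by show τ - z + z = τ; abel⟩
    rw [Set.mem_setOf_eq, e]
    exact hz
end
end

section
/- If f is Weyl p-almost periodic with respect to a van Hove sequence (A_n), then |f| is Weyl p-almost periodic with respect to (A_n). -/
open MeasureTheory Filter Topology
open scoped ENNReal Pointwise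

noncomputable section

variable {G : Type*} [AddCommGroup G] [TopologicalSpace G] [IsTopologicalAddGroup G]
  [LocallyCompactSpace G] [MeasurableSpace G] [BorelSpace G]

/-! ### Auxiliary lemmas -/

section Aux

lemma isChar_one : IsChar (fun _ : G => (1 : ℂ)) :=
  ⟨continuous_const, fun _ _ => (one_mul 1).symm, fun _ => norm_one⟩

lemma IsChar.mul' {χ ψ : G → ℂ} (h1 : IsChar χ) (h2 : IsChar ψ) :
    IsChar (fun x => χ x * ψ x) := by
  refine ⟨h1.1.mul h2.1, fun x y => ?_, fun x => ?_⟩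
  · simp only [h1.2.1, h2.2.1]; ring
  · simp only [norm_mul, h1.2.2, h2.2.2, one_mul]

lemma IsChar.conj' {χ : G → ℂ} (h : IsChar χ) :
    IsChar (fun x => (starRingEnd ℂ) (χ x)) := by
  refine ⟨Complex.continuous_conj.comp h.1, fun x y => ?_, fun x => ?_⟩
  · simp only [h.2.1, map_mul]
  · simp only [RCLike.norm_conj]; exact h.2.2 x

lemma isTrigPoly_fintype {ι : Type} [Fintype ι] (c : ι → ℂ) (χ : ι → G → ℂ)
    (h : ∀ i, IsChar (χ i)) : IsTrigPoly (fun x => ∑ i, c i * χ i x) := by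
  refine ⟨Fintype.card ι, c ∘ (Fintype.equivFin ι).symm, χ ∘ (Fintype.equivFin ι).symm,
    fun i => h _, ?_⟩
  funext x
  exact (Equiv.sum_comp (Fintype.equivFin ι).symm (fun i => c i * χ i x)).symm

lemma isTrigPoly_const (a : ℂ) : IsTrigPoly (fun _ : G => a) := by
  refine ⟨1, fun _ => a, fun _ => fun _ => (1 : ℂ), fun _ => isChar_one, ?_⟩
  funext x
  simp

lemma IsTrigPoly.add' {P Q : G → ℂ} (hP : IsTrigPoly P) (hQ : IsTrigPoly Q) :
    IsTrigPoly (fun x => P x + Q x) := by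
  obtain ⟨n, c, χ, hχ, rfl⟩ := hP
  obtain ⟨m, d, ψ, hψ, rfl⟩ := hQ
  have := isTrigPoly_fintype (ι := Fin n ⊕ Fin m) (Sum.elim c d) (Sum.elim χ ψ)
    (fun i => by cases i with
      | inl a => exact hχ a
      | inr b => exact hψ b)
  simpa [Fintype.sum_sum_type] using this

lemma IsTrigPoly.mul' {P Q : G → ℂ} (hP : IsTrigPoly P) (hQ : IsTrigPoly Q) :
    IsTrigPoly (fun x => P x * Q x) := by
  obtain ⟨n, c, χ, hχ, rfl⟩ := hP
  obtain ⟨m, d, ψ, hψ, rfl⟩ := hQ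
  have := isTrigPoly_fintype (ι := Fin n × Fin m)
    (fun ij => c ij.1 * d ij.2) (fun ij x => χ ij.1 x * ψ ij.2 x)
    (fun ij => (hχ ij.1).mul' (hψ ij.2))
  convert this using 1
  funext x
  rw [Finset.sum_mul_sum, Fintype.sum_prod_type]
  exact Finset.sum_congr rfl fun i _ => Finset.sum_congr rfl fun j _ => by ring

lemma IsTrigPoly.conj' {P : G → ℂ} (hP : IsTrigPoly P) :
    IsTrigPoly (fun x => (starRingEnd ℂ) (P x)) := by
  obtain ⟨n, c, χ, hχ, rfl⟩ := hP
  have := isTrigPoly_fintype (fun i => (starRingEnd ℂ) (c i))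
    (fun i x => (starRingEnd ℂ) (χ i x)) (fun i => (hχ i).conj')
  simpa [map_sum, map_mul] using this

lemma IsTrigPoly.pow' {P : G → ℂ} (hP : IsTrigPoly P) (n : ℕ) :
    IsTrigPoly (fun x => P x ^ n) := by
  induction n with
  | zero => simpa using isTrigPoly_const (G := G) 1
  | succ k ih => simpa [pow_succ] using ih.mul' hP

lemma isTrigPoly_polyEval (r : Polynomial ℂ) {g : G → ℂ} (hg : IsTrigPoly g) :
    IsTrigPoly (fun x => r.eval (g x)) := by
  induction r using Polynomial.induction_on with
  | C a => simpa using isTrigPoly_const (G := G) a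
  | add p q hp hq => simpa [Polynomial.eval_add] using hp.add' hq
  | monomial k a _ =>
      simpa [Polynomial.eval_mul, Polynomial.eval_pow, Polynomial.eval_C, Polynomial.eval_X]
        using (isTrigPoly_const (G := G) a).mul' (hg.pow' (k + 1))

lemma IsTrigPoly.continuous' {P : G → ℂ} (hP : IsTrigPoly P) : Continuous P := by
  obtain ⟨n, c, χ, hχ, rfl⟩ := hP
  exact continuous_finset_sum _ fun i _ => continuous_const.mul (hχ i).1

lemma IsTrigPoly.bounded' {P : G → ℂ} (hP : IsTrigPoly P) :
    ∃ B : ℝ, 0 ≤ B ∧ ∀ x, ‖P x‖ ≤ B := by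
  obtain ⟨n, c, χ, hχ, rfl⟩ := hP
  refine ⟨∑ i, ‖c i‖, Finset.sum_nonneg fun i _ => norm_nonneg _, fun x => ?_⟩
  calc ‖∑ i, c i * χ i x‖ ≤ ∑ i, ‖c i * χ i x‖ := norm_sum_le _ _
    _ = ∑ i, ‖c i‖ := by
        refine Finset.sum_congr rfl fun i _ => ?_
        rw [norm_mul, (hχ i).2.2, mul_one]

lemma limsup_add_const_le_ennreal (a : ℕ → ℝ≥0∞) (c : ℝ≥0∞) :
    Filter.limsup (fun n => a n + c) Filter.atTop ≤ Filter.limsup a Filter.atTop + c := by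
  refine ENNReal.le_of_forall_pos_le_add fun ε hε hlt => ?_
  have htop : Filter.limsup a Filter.atTop ≠ ⊤ := by
    intro h
    rw [h] at hlt
    simp at hlt
  have hlt' : Filter.limsup a Filter.atTop < Filter.limsup a Filter.atTop + ε :=
    ENNReal.lt_add_right htop (by exact_mod_cast hε.ne')
  have hev : ∀ᶠ n in Filter.atTop, a n < Filter.limsup a Filter.atTop + ε :=
    Filter.eventually_lt_of_limsup_lt hlt'
  refine Filter.limsup_le_of_le (by isBoundedDefault) ?_
  filter_upwards [hev] with n hn
  calc a n + c ≤ Filter.limsup a Filter.atTop + ε + c := add_le_add_left hn.le c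
    _ = Filter.limsup a Filter.atTop + c + ε := by ring

lemma snorm_le_of_pointwise (μ : Measure G) [μ.IsAddHaarMeasure] {K : Set G}
    (hKo : IsOpen K) (hKc : IsCompact (closure K)) {p : ℝ} (hp : 1 ≤ p)
    {g u : G → ℂ} (hu : AEStronglyMeasurable u μ) {δ : ℝ} (hδ : 0 ≤ δ)
    (hpt : ∀ x, ‖g x‖ ≤ ‖u x‖ + δ) :
    SNorm μ K p g ≤ SNorm μ K p u + ENNReal.ofReal δ := by
  have hp0 : 0 < p := lt_of_lt_of_le one_pos hp
  have hip : (0 : ℝ) < 1 / p := by positivity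
  rcases K.eq_empty_or_nonempty with rfl | hne
  · have : SNorm μ (∅ : Set G) p g = 0 := by
      simp [SNorm, ENNReal.zero_rpow_of_pos, hip, hp0]
    rw [this]
    exact zero_le
  · have hK0 : μ K ≠ 0 := (hKo.measure_pos μ hne).ne'
    have hKfin : μ K ≠ ⊤ :=
      (lt_of_le_of_lt (measure_mono subset_closure) hKc.measure_lt_top).ne
    set m : ℝ≥0∞ := (μ K) ^ (1 / p) with hm
    have hm0 : m ≠ 0 := by
      simp only [hm, ne_eq, ENNReal.rpow_eq_zero_iff, not_or]
      exact ⟨fun h => hK0 h.1, fun h => hKfin h.1⟩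
    have hmtop : m ≠ ⊤ := by
      simp only [hm, ne_eq, ENNReal.rpow_eq_top_iff, not_or]
      exact ⟨fun h => hK0 h.1, fun h => hKfin h.1⟩
    rw [SNorm]
    refine iSup_le fun y => ?_
    set ν := μ.restrict (y +ᵥ K) with hν
    have hνuniv : ν Set.univ = μ K := by
      rw [hν, Measure.restrict_apply_univ]
      exact measure_vadd μ y K
    -- pointwise comparison function
    set h1 : G → ℝ := fun x => ‖u x‖ with hh1
    set h2 : G → ℝ := fun _ => δ with hh2
    have step1 : ((∫⁻ x in y +ᵥ K, (‖g x‖₊ : ℝ≥0∞) ^ p ∂μ)) ^ (1 / p) ≤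
        eLpNorm' (h1 + h2) p ν := by
      rw [eLpNorm']
      refine ENNReal.rpow_le_rpow ?_ hip.le
      refine lintegral_mono fun x => ?_
      refine ENNReal.rpow_le_rpow ?_ hp0.le
      refine ENNReal.coe_le_coe.mpr ?_
      have hge : (0 : ℝ) ≤ h1 x + h2 x := by
        simp only [hh1, hh2]
        positivity
      have : ‖(h1 + h2) x‖ = h1 x + h2 x := by
        simp only [Pi.add_apply]
        exact Real.norm_of_nonneg hge
      rw [← NNReal.coe_le_coe, coe_nnnorm, coe_nnnorm, this]
      exact hpt x
    have step2 : eLpNorm' (h1 + h2) p ν ≤ eLpNorm' h1 p ν + eLpNorm' h2 p ν :=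
      eLpNorm'_add_le (hu.norm.restrict) aestronglyMeasurable_const hp
    have e1 : eLpNorm' h1 p ν = ((∫⁻ x in y +ᵥ K, (‖u x‖₊ : ℝ≥0∞) ^ p ∂μ)) ^ (1 / p) := by
      rw [eLpNorm']
      congr 1
      refine lintegral_congr fun x => ?_
      have hx : ‖h1 x‖₊ = ‖u x‖₊ := nnnorm_norm (u x)
      change (‖h1 x‖₊ : ℝ≥0∞) ^ p = _
      rw [hx]
    have e2 : eLpNorm' h2 p ν = ENNReal.ofReal δ * m := by
      rw [eLpNorm'_const _ hp0, hνuniv, ← hm]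
      congr 1
      rw [← Real.enorm_eq_ofReal hδ]
    calc ((∫⁻ x in y +ᵥ K, (‖g x‖₊ : ℝ≥0∞) ^ p ∂μ) / μ K) ^ (1 / p)
        = ((∫⁻ x in y +ᵥ K, (‖g x‖₊ : ℝ≥0∞) ^ p ∂μ)) ^ (1 / p) / m := by
          rw [ENNReal.div_rpow_of_nonneg _ _ hip.le]
      _ ≤ (eLpNorm' h1 p ν + eLpNorm' h2 p ν) / m := by
          exact ENNReal.div_le_div_right (le_trans step1 step2) m
      _ = eLpNorm' h1 p ν / m + ENNReal.ofReal δ * m / m := by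
          rw [ENNReal.add_div, e2]
      _ ≤ SNorm μ K p u + ENNReal.ofReal δ := by
          gcongr
          · rw [e1, ← ENNReal.div_rpow_of_nonneg _ _ hip.le]
            exact le_iSup (fun y => ((∫⁻ x in y +ᵥ K, (‖u x‖₊ : ℝ≥0∞) ^ p ∂μ) / μ K) ^ (1 / p)) y
          · rw [mul_div_assoc, ENNReal.div_self hm0 hmtop, mul_one]

end Aux


theorem weylAP_abs [SigmaCompactSpace G] (μ : Measure G) [μ.IsAddHaarMeasure]
    (A : ℕ → Set G) (hA : IsVanHove μ A)
    (p : ℝ) (hp : 1 ≤ p) (f : G → ℂ) (hf : MemLpLoc μ p f)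
    (hap : WeylAP μ A p f) :
    WeylAP μ A p (fun x => (‖f x‖ : ℂ)) := by
  intro ε hε
  have hε2 : 0 < ε / 2 := by linarith
  obtain ⟨P, hP, hWP⟩ := hap (ε / 2) hε2
  obtain ⟨B, hB0, hB⟩ := hP.bounded'
  obtain ⟨r, hr⟩ := exists_polynomial_near_of_continuousOn 0 (B ^ 2) Real.sqrt
    Real.continuous_sqrt.continuousOn (ε / 2) hε2
  set Q : G → ℂ := fun x => (r.map (algebraMap ℝ ℂ)).eval (P x * (starRingEnd ℂ) (P x))
    with hQdef
  have hQtrig : IsTrigPoly Q := isTrigPoly_polyEval _ (hP.mul' hP.conj')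
  have hQval : ∀ x, Q x = ((r.eval (‖P x‖ ^ 2) : ℝ) : ℂ) := by
    intro x
    have h1 : P x * (starRingEnd ℂ) (P x) = ((‖P x‖ ^ 2 : ℝ) : ℂ) := by
      rw [Complex.mul_conj]
      norm_cast
      rw [Complex.normSq_eq_norm_sq]
    rw [hQdef]
    simp only
    rw [h1]
    have : ((‖P x‖ ^ 2 : ℝ) : ℂ) = algebraMap ℝ ℂ (‖P x‖ ^ 2) := rfl
    rw [this, Polynomial.eval_map, Polynomial.eval₂_at_apply]
    rfl
  have hpt : ∀ x, ‖((fun x => (‖f x‖ : ℂ)) - Q) x‖ ≤ ‖(f - P) x‖ + ε / 2 := by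
    intro x
    have key2 : ‖((‖P x‖ : ℂ)) - Q x‖ ≤ ε / 2 := by
      rw [hQval x, ← Complex.ofReal_sub]
      rw [Complex.norm_real]
      have ht : ‖P x‖ ^ 2 ∈ Set.Icc (0 : ℝ) (B ^ 2) :=
        ⟨sq_nonneg _, by
          have := hB x
          nlinarith [norm_nonneg (P x)]⟩
      have hsq : Real.sqrt (‖P x‖ ^ 2) = ‖P x‖ := Real.sqrt_sq (norm_nonneg _)
      have := hr (‖P x‖ ^ 2) ht
      rw [hsq] at this
      rw [abs_sub_comm] at this
      exact this.le
    have key1 : ‖((‖f x‖ : ℂ)) - ((‖P x‖ : ℂ))‖ ≤ ‖f x - P x‖ := by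
      rw [← Complex.ofReal_sub, Complex.norm_real]
      exact abs_norm_sub_norm_le _ _
    calc ‖((fun x => (‖f x‖ : ℂ)) - Q) x‖
        = ‖(((‖f x‖ : ℂ)) - ((‖P x‖ : ℂ))) + (((‖P x‖ : ℂ)) - Q x)‖ := by
          simp only [Pi.sub_apply]
          ring_nf
      _ ≤ ‖((‖f x‖ : ℂ)) - ((‖P x‖ : ℂ))‖ + ‖((‖P x‖ : ℂ)) - Q x‖ := norm_add_le _ _
      _ ≤ ‖f x - P x‖ + ε / 2 := add_le_add key1 key2
      _ = ‖(f - P) x‖ + ε / 2 := by simp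
  have hu : AEStronglyMeasurable (f - P) μ := hf.1.sub hP.continuous'.aestronglyMeasurable
  have hsn : ∀ n, SNorm μ (A n) p ((fun x => (‖f x‖ : ℂ)) - Q) ≤
      SNorm μ (A n) p (f - P) + ENNReal.ofReal (ε / 2) := fun n =>
    snorm_le_of_pointwise μ (hA.1 n).1 (hA.1 n).2 hp hu hε2.le hpt
  refine ⟨Q, hQtrig, ?_⟩
  calc WSemi μ A p ((fun x => (‖f x‖ : ℂ)) - Q)
      ≤ Filter.limsup (fun n => SNorm μ (A n) p (f - P) + ENNReal.ofReal (ε / 2)) atTop := by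
        exact Filter.limsup_le_limsup (Filter.Eventually.of_forall hsn)
    _ ≤ WSemi μ A p (f - P) + ENNReal.ofReal (ε / 2) :=
        limsup_add_const_le_ennreal _ _
    _ < ENNReal.ofReal (ε / 2) + ENNReal.ofReal (ε / 2) :=
        ENNReal.add_lt_add_right ENNReal.ofReal_ne_top hWP
    _ = ENNReal.ofReal ε := by
        rw [← ENNReal.ofReal_add hε2.le hε2.le]
        norm_num
end
end
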